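/- arXiv:2511.06539 — 12 statements merged into one kernel-verified Lean document; each statement's English description precedes it below -/
import Mathlib

section
/- For every n ≥ 5, the antiprism graph A_n is d-balanced, i.e., its balanced domination number equals 0. -/
open Finset

open scoped Classical in
noncomputable def closedSum {V : Type*} [Fintype V] (G : SimpleGraph V) (f : V → ℤ) (v : V) : ℤ :=
  f v + ∑ u ∈ Finset.univ.filter (fun u => G.Adj v u), f u

def IsBDF {V : Type*} [Fintype V] (G : SimpleGraph V) (f : V → ℤ) : Prop :=
  (∀ v, f v = -1 ∨ f v = 0 ∨ f v = 1) ∧ ∀ v, closedSum G f v = 0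


/-- The antiprism graph `A n`: three layers of `n` vertices, each layer a cycle,
with edges a_i b_i, b_i c_i, a_{i+1} b_i, b_{i+1} c_i (indices mod n). -/
def antiprism (n : ℕ) : SimpleGraph (Fin n × Fin 3) :=
  SimpleGraph.fromRel (fun p q =>
    (p.2 = q.2 ∧ (q.1 : ℕ) = ((p.1 : ℕ) + 1) % n) ∨
    ((p.1 = q.1) ∧ (p.2 : ℕ) + 1 = (q.2 : ℕ)) ∨
    ((p.1 : ℕ) = ((q.1 : ℕ) + 1) % n ∧ (p.2 : ℕ) + 1 = (q.2 : ℕ)))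

/- ## Auxiliary lemmas -/

lemma AP.val1 (n : ℕ) [NeZero n] (hn : 2 ≤ n) : ((1:Fin n):ℕ) = 1 := by
  rw [Fin.val_one']; exact Nat.mod_eq_of_lt hn

lemma AP.succ_iff (n : ℕ) [NeZero n] (hn : 2 ≤ n) (a b : Fin n) :
    (b:ℕ) = ((a:ℕ)+1)%n ↔ b = a+1 := by
  rw [Fin.ext_iff, Fin.add_def, AP.val1 n hn]

open Fin.NatCast in
lemma AP.ne_of_valcast (n : ℕ) [NeZero n] (k : ℕ) (h1 : 0 < k) (h2 : k < n) :
    ((k:ℕ):Fin n) ≠ 0 := by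
  intro h
  have := congrArg Fin.val h
  rw [Fin.val_cast_of_lt h2] at this
  simp at this; omega

open Fin.NatCast Fin.CommRing in
lemma AP.two_ne (n : ℕ) [NeZero n] (hn : 5 ≤ n) (i : Fin n) : i + 1 ≠ i - 1 := by
  intro h
  have h3 : ((2:ℕ):Fin n) = 0 := by push_cast; linear_combination h
  exact AP.ne_of_valcast n 2 (by omega) (by omega) h3

open Fin.NatCast Fin.CommRing in
lemma AP.one_ne (n : ℕ) [NeZero n] (hn : 5 ≤ n) (i : Fin n) : i ≠ i + 1 := by
  intro h
  have h3 : ((1:ℕ):Fin n) = 0 := by push_cast; linear_combination -h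
  exact AP.ne_of_valcast n 1 (by omega) (by omega) h3

open Fin.NatCast Fin.CommRing in
lemma AP.one_ne' (n : ℕ) [NeZero n] (hn : 5 ≤ n) (i : Fin n) : i ≠ i - 1 := by
  intro h
  have h3 : ((1:ℕ):Fin n) = 0 := by push_cast; linear_combination h
  exact AP.ne_of_valcast n 1 (by omega) (by omega) h3

lemma AP.imp (n : ℕ) [NeZero n] (hn : 5 ≤ n) (i j : Fin n) :
    (j = i + 1 ∨ i = j + 1) → ¬ i = j := by
  rintro (h | h) hh
  · exact AP.one_ne n hn i (hh.trans h)
  · exact AP.one_ne n hn j (hh.symm.trans h)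

open scoped Classical in
lemma AP.nbr0 (n : ℕ) [NeZero n] (hn : 5 ≤ n) (i : Fin n) :
    (univ.filter (fun u => (antiprism n).Adj (i, (0:Fin 3)) u)) =
      {(i+1, 0), (i-1, 0), (i, 1), (i-1, 1)} := by
  ext ⟨j, t⟩
  simp only [mem_filter, mem_univ, true_and, antiprism, SimpleGraph.fromRel_adj,
    mem_insert, mem_singleton, Prod.mk.injEq, Ne, Prod.ext_iff]
  have e : ∀ a b : Fin n, b = a - 1 ↔ a = b + 1 := fun a b => by
    rw [eq_sub_iff_add_eq, eq_comm]
  fin_cases t <;> simp_all [AP.succ_iff n (by omega : 2 ≤ n), e] <;>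
    first
      | exact AP.imp n hn i j
      | exact fun h => Ne.symm (AP.imp n hn i j h)
      | rw [@eq_comm _ i j]

open scoped Classical in
lemma AP.nbr1 (n : ℕ) [NeZero n] (hn : 5 ≤ n) (i : Fin n) :
    (univ.filter (fun u => (antiprism n).Adj (i, (1:Fin 3)) u)) =
      {(i+1, 1), (i-1, 1), (i, 0), (i+1, 0), (i, 2), (i-1, 2)} := by
  ext ⟨j, t⟩
  simp only [mem_filter, mem_univ, true_and, antiprism, SimpleGraph.fromRel_adj,
    mem_insert, mem_singleton, Prod.mk.injEq, Ne, Prod.ext_iff]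
  have e : ∀ a b : Fin n, b = a - 1 ↔ a = b + 1 := fun a b => by
    rw [eq_sub_iff_add_eq, eq_comm]
  fin_cases t <;> simp_all [AP.succ_iff n (by omega : 2 ≤ n), e] <;>
    first
      | exact AP.imp n hn i j
      | exact fun h => Ne.symm (AP.imp n hn i j h)
      | rw [@eq_comm _ i j]

open scoped Classical in
lemma AP.nbr2 (n : ℕ) [NeZero n] (hn : 5 ≤ n) (i : Fin n) :
    (univ.filter (fun u => (antiprism n).Adj (i, (2:Fin 3)) u)) =
      {(i+1, 2), (i-1, 2), (i, 1), (i+1, 1)} := by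
  ext ⟨j, t⟩
  simp only [mem_filter, mem_univ, true_and, antiprism, SimpleGraph.fromRel_adj,
    mem_insert, mem_singleton, Prod.mk.injEq, Ne, Prod.ext_iff]
  have e : ∀ a b : Fin n, b = a - 1 ↔ a = b + 1 := fun a b => by
    rw [eq_sub_iff_add_eq, eq_comm]
  fin_cases t <;> simp_all [AP.succ_iff n (by omega : 2 ≤ n), e] <;>
    first
      | exact AP.imp n hn i j
      | exact fun h => Ne.symm (AP.imp n hn i j h)
      | rw [@eq_comm _ i j]

lemma AP.sum_shift (n : ℕ) [NeZero n] (g : Fin n → ℤ) (c : Fin n) :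
    ∑ i, g (i + c) = ∑ i, g i :=
  Fintype.sum_equiv (Equiv.addRight c) _ _ (fun _ => rfl)

lemma AP.sum_shift' (n : ℕ) [NeZero n] (g : Fin n → ℤ) (c : Fin n) :
    ∑ i, g (i - c) = ∑ i, g i :=
  Fintype.sum_equiv (Equiv.subRight c) _ _ (fun _ => rfl)

/-- For every n ≥ 5 the antiprism A_n is d-balanced: the maximum weight of a
balanced dominating function equals 0. -/
theorem antiprism_d_balanced (n : ℕ) (hn : 5 ≤ n) :
    IsGreatest {w : ℤ | ∃ f : Fin n × Fin 3 → ℤ, IsBDF (antiprism n) f ∧ w = ∑ v, f v} 0 := by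
  haveI : NeZero n := ⟨by omega⟩
  constructor
  · exact ⟨fun _ => 0, ⟨fun v => Or.inr (Or.inl rfl), fun v => by simp [closedSum]⟩, by simp⟩
  · rintro w ⟨f, ⟨hf1, hf2⟩, rfl⟩
    set A := ∑ i : Fin n, f (i, (0:Fin 3)) with hA
    set B := ∑ i : Fin n, f (i, (1:Fin 3)) with hB
    set C := ∑ i : Fin n, f (i, (2:Fin 3)) with hC
    have key0 : ∀ i : Fin n, f (i,(0:Fin 3)) + (f (i+1,(0:Fin 3)) + (f (i-1,(0:Fin 3)) +
        (f (i,(1:Fin 3)) + f (i-1,(1:Fin 3))))) = 0 := by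
      intro i
      have h := hf2 (i, (0:Fin 3))
      rw [closedSum, AP.nbr0 n hn] at h
      rw [Finset.sum_insert (by simp [Prod.ext_iff]; first | omega | exact AP.two_ne n hn i | exact AP.one_ne n hn i | exact AP.one_ne' n hn i),
        Finset.sum_insert (by simp [Prod.ext_iff, Prod.mk.injEq]),
        Finset.sum_insert (by simp [Prod.ext_iff]; exact AP.one_ne' n hn i),
        Finset.sum_singleton] at h
      exact h
    have key1 : ∀ i : Fin n, f (i,(1:Fin 3)) + (f (i+1,(1:Fin 3)) + (f (i-1,(1:Fin 3)) +
        (f (i,(0:Fin 3)) + (f (i+1,(0:Fin 3)) + (f (i,(2:Fin 3)) + f (i-1,(2:Fin 3))))))) = 0 := by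
      intro i
      have h := hf2 (i, (1:Fin 3))
      rw [closedSum, AP.nbr1 n hn] at h
      rw [Finset.sum_insert (by simp [Prod.ext_iff]; first | omega | exact AP.two_ne n hn i | exact AP.one_ne n hn i | exact AP.one_ne' n hn i),
        Finset.sum_insert (by simp [Prod.ext_iff, Prod.mk.injEq]),
        Finset.sum_insert (by simp [Prod.ext_iff]; first | omega | exact AP.two_ne n hn i | exact AP.one_ne n hn i | exact AP.one_ne' n hn i),
        Finset.sum_insert (by simp [Prod.ext_iff, Prod.mk.injEq]),
        Finset.sum_insert (by simp [Prod.ext_iff]; exact AP.one_ne' n hn i),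
        Finset.sum_singleton] at h
      exact h
    have key2 : ∀ i : Fin n, f (i,(2:Fin 3)) + (f (i+1,(2:Fin 3)) + (f (i-1,(2:Fin 3)) +
        (f (i,(1:Fin 3)) + f (i+1,(1:Fin 3))))) = 0 := by
      intro i
      have h := hf2 (i, (2:Fin 3))
      rw [closedSum, AP.nbr2 n hn] at h
      rw [Finset.sum_insert (by simp [Prod.ext_iff]; first | omega | exact AP.two_ne n hn i | exact AP.one_ne n hn i | exact AP.one_ne' n hn i),
        Finset.sum_insert (by simp [Prod.ext_iff, Prod.mk.injEq]),
        Finset.sum_insert (by simp [Prod.ext_iff]; first | omega | exact AP.two_ne n hn i | exact AP.one_ne n hn i | exact AP.one_ne' n hn i),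
        Finset.sum_singleton] at h
      exact h
    have sA0 : ∑ i : Fin n, f (i,(0:Fin 3)) = A := hA.symm
    have sB0 : ∑ i : Fin n, f (i,(1:Fin 3)) = B := hB.symm
    have sC0 : ∑ i : Fin n, f (i,(2:Fin 3)) = C := hC.symm
    have sA1 : ∑ i : Fin n, f (i+1,(0:Fin 3)) = A := AP.sum_shift n (fun j => f (j,(0:Fin 3))) 1
    have sA2 : ∑ i : Fin n, f (i-1,(0:Fin 3)) = A := AP.sum_shift' n (fun j => f (j,(0:Fin 3))) 1
    have sB1 : ∑ i : Fin n, f (i+1,(1:Fin 3)) = B := AP.sum_shift n (fun j => f (j,(1:Fin 3))) 1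
    have sB2 : ∑ i : Fin n, f (i-1,(1:Fin 3)) = B := AP.sum_shift' n (fun j => f (j,(1:Fin 3))) 1
    have sC1 : ∑ i : Fin n, f (i+1,(2:Fin 3)) = C := AP.sum_shift n (fun j => f (j,(2:Fin 3))) 1
    have sC2 : ∑ i : Fin n, f (i-1,(2:Fin 3)) = C := AP.sum_shift' n (fun j => f (j,(2:Fin 3))) 1
    have e0 : A + (A + (A + (B + B))) = 0 := by
      have h : ∑ i : Fin n, (f (i,(0:Fin 3)) + (f (i+1,(0:Fin 3)) + (f (i-1,(0:Fin 3)) +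
          (f (i,(1:Fin 3)) + f (i-1,(1:Fin 3)))))) = 0 := by
        simp [key0]
      simp only [Finset.sum_add_distrib] at h
      rwa [sA0, sA1, sA2, sB0, sB2] at h
    have e1 : B + (B + (B + (A + (A + (C + C))))) = 0 := by
      have h : ∑ i : Fin n, (f (i,(1:Fin 3)) + (f (i+1,(1:Fin 3)) + (f (i-1,(1:Fin 3)) +
          (f (i,(0:Fin 3)) + (f (i+1,(0:Fin 3)) + (f (i,(2:Fin 3)) + f (i-1,(2:Fin 3)))))))) = 0 := by
        simp [key1]
      simp only [Finset.sum_add_distrib] at h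
      rwa [sA0, sA1, sB0, sB1, sB2, sC0, sC2] at h
    have e2 : C + (C + (C + (B + B))) = 0 := by
      have h : ∑ i : Fin n, (f (i,(2:Fin 3)) + (f (i+1,(2:Fin 3)) + (f (i-1,(2:Fin 3)) +
          (f (i,(1:Fin 3)) + f (i+1,(1:Fin 3)))))) = 0 := by
        simp [key2]
      simp only [Finset.sum_add_distrib] at h
      rwa [sB0, sB1, sC0, sC1, sC2] at h
    have htot : ∑ v : Fin n × Fin 3, f v = A + B + C := by
      rw [Fintype.sum_prod_type]
      simp only [Fin.sum_univ_three]
      rw [Finset.sum_add_distrib, Finset.sum_add_distrib, sA0, sB0, sC0]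
    rw [htot]
    linarith
end

section
/- For every n ≥ 5, the convex polytope graph D_n is d-balanced, i.e., its balanced domination number equals 0. -/
open Finset

/-- The convex polytope graph `D n`: four layers a,b,c,d of `n` vertices with edges
a_i a_{i+1}, d_i d_{i+1}, a_i b_i, b_i c_i, b_{i+1} c_i, c_i d_i (indices mod n). -/
def polytopeD (n : ℕ) : SimpleGraph (Fin n × Fin 4) :=
  SimpleGraph.fromRel (fun p q =>
    (p.2 = q.2 ∧ ((p.2 : ℕ) = 0 ∨ (p.2 : ℕ) = 3) ∧ (q.1 : ℕ) = ((p.1 : ℕ) + 1) % n) ∨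
    ((p.1 = q.1) ∧ (p.2 : ℕ) + 1 = (q.2 : ℕ)) ∨
    ((p.2 : ℕ) = 2 ∧ (q.2 : ℕ) = 1 ∧ (q.1 : ℕ) = ((p.1 : ℕ) + 1) % n))

section Aux

variable {n : ℕ} [NeZero n]

private lemma val_succ' (hn : 5 ≤ n) (i : Fin n) : ((i+1 : Fin n) : ℕ) = (i.val + 1) % n := by
  rw [Fin.val_add, Fin.val_one', Nat.mod_eq_of_lt (by omega : 1 < n)]

private lemma fin_eq_succ_iff (hn : 5 ≤ n) (i j : Fin n) :
    ((j : ℕ) = (i.val + 1) % n ↔ j = i + 1) := by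
  rw [Fin.ext_iff, val_succ' hn]

private lemma fin_eq_pred_iff (hn : 5 ≤ n) (i j : Fin n) :
    ((i : ℕ) = (j.val + 1) % n ↔ j = i - 1) := by
  rw [fin_eq_succ_iff hn j i]
  constructor
  · intro h; rw [h]; abel
  · intro h; rw [h]; abel

private lemma fin_succ_ne_pred' (hn : 5 ≤ n) (i : Fin n) : (i + 1 : Fin n) ≠ i - 1 := by
  intro h
  have h2 : (i + 1) + 1 = i := by rw [h]; abel
  have h3 := congrArg Fin.val h2
  rw [val_succ' hn, val_succ' hn] at h3
  have hi := i.isLt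
  rcases Nat.lt_or_ge (i.val + 1) n with h1 | h1
  · rw [Nat.mod_eq_of_lt h1] at h3
    rcases Nat.lt_or_ge (i.val + 1 + 1) n with h4 | h4
    · rw [Nat.mod_eq_of_lt h4] at h3; omega
    · rw [Nat.mod_eq_sub_mod h4, Nat.mod_eq_of_lt (by omega)] at h3
      omega
  · have he : i.val + 1 = n := by omega
    rw [he, Nat.mod_self, Nat.mod_eq_of_lt (by omega)] at h3
    omega

private lemma fin_succ_ne_self' (hn : 5 ≤ n) (i : Fin n) : (i + 1 : Fin n) ≠ i := by
  intro h
  have h3 := congrArg Fin.val h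
  rw [val_succ' hn] at h3
  have hi := i.isLt
  rcases Nat.lt_or_ge (i.val + 1) n with h1 | h1
  · rw [Nat.mod_eq_of_lt h1] at h3; omega
  · have he : i.val + 1 = n := by omega
    rw [he, Nat.mod_self] at h3; omega

private lemma fin_pred_ne_self' (hn : 5 ≤ n) (i : Fin n) : (i - 1 : Fin n) ≠ i := by
  intro h
  have : i + 1 = i := by nth_rewrite 1 [← h]; abel
  exact fin_succ_ne_self' hn i this

/-- Explicit neighbour sets in `polytopeD n`. -/
def nbrs (v : Fin n × Fin 4) : Finset (Fin n × Fin 4) :=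
  if v.2 = 0 then {(v.1+1,0),(v.1-1,0),(v.1,1)}
  else if v.2 = 1 then {(v.1,0),(v.1,2),(v.1-1,2)}
  else if v.2 = 2 then {(v.1,1),(v.1+1,1),(v.1,3)}
  else {(v.1+1,3),(v.1-1,3),(v.1,2)}

open scoped Classical in
private lemma filter_adj_eq (hn : 5 ≤ n) (i : Fin n) (t : Fin 4) :
    Finset.univ.filter (fun u => (polytopeD n).Adj (i,t) u) = nbrs (i,t) := by
  have e1 : n ≠ 1 := by omega
  have e2 := fin_succ_ne_self' hn i
  have e3 := fin_pred_ne_self' hn i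
  ext ⟨j, s⟩
  fin_cases t <;> fin_cases s <;>
    simp [polytopeD, nbrs, SimpleGraph.fromRel_adj, fin_eq_succ_iff hn, fin_eq_pred_iff hn,
      Prod.ext_iff]
  all_goals try simp only [eq_sub_iff_add_eq, (by decide : ((3:Fin 4):ℕ) = 3)]
  all_goals aesop

private lemma nbrs_card (hn : 5 ≤ n) (i : Fin n) (t : Fin 4) :
    (nbrs (i,t)).card = 3 := by
  have e2 := fin_succ_ne_self' hn i
  have e3 := fin_pred_ne_self' hn i
  have e4 := fin_succ_ne_pred' hn i
  fin_cases t
  · exact Finset.card_eq_three.mpr ⟨(i+1,0), (i-1,0), (i,1),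
      by simp [Prod.ext_iff, e4], by simp [Prod.ext_iff], by simp [Prod.ext_iff],
      by simp [nbrs]⟩
  · exact Finset.card_eq_three.mpr ⟨(i,0), (i,2), (i-1,2),
      by simp [Prod.ext_iff], by simp [Prod.ext_iff], by simp [Prod.ext_iff, Ne.symm e3],
      by simp [nbrs]⟩
  · exact Finset.card_eq_three.mpr ⟨(i,1), (i+1,1), (i,3),
      by (simp [Prod.ext_iff]; omega), by simp [Prod.ext_iff],
      by simp [Prod.ext_iff], by simp [nbrs]⟩
  · exact Finset.card_eq_three.mpr ⟨(i+1,3), (i-1,3), (i,2),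
      by simp [Prod.ext_iff, e4], by simp [Prod.ext_iff], by simp [Prod.ext_iff],
      by simp [nbrs]⟩

end Aux

/-- For every n ≥ 5 the convex polytope graph D_n is d-balanced. -/
theorem polytopeD_d_balanced (n : ℕ) (hn : 5 ≤ n) :
    IsGreatest {w : ℤ | ∃ f : Fin n × Fin 4 → ℤ, IsBDF (polytopeD n) f ∧ w = ∑ v, f v} 0 := by
  haveI : NeZero n := ⟨by omega⟩
  classical
  constructor
  · exact ⟨fun _ => 0, ⟨fun v => Or.inr (Or.inl rfl), fun v => by simp [closedSum]⟩, by simp⟩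
  · rintro w ⟨f, ⟨-, hbal⟩, rfl⟩
    have key : (4 : ℤ) * ∑ v, f v = 0 := by
      have h0 : ∑ v, closedSum (polytopeD n) f v = 0 := by
        simp [hbal]
      calc (4 : ℤ) * ∑ v, f v
          = ∑ v, f v + 3 * ∑ v, f v := by ring
        _ = ∑ v, f v + ∑ u : Fin n × Fin 4, (3 : ℤ) * f u := by rw [Finset.mul_sum]
        _ = ∑ v, f v + ∑ u : Fin n × Fin 4,
              ((Finset.univ.filter (fun v => (polytopeD n).Adj v u)).card : ℤ) * f u := by
            congr 1
            refine Finset.sum_congr rfl fun u _ => ?_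
            congr 1
            have : Finset.univ.filter (fun v => (polytopeD n).Adj v u)
                = Finset.univ.filter (fun v => (polytopeD n).Adj u v) := by
              apply Finset.filter_congr
              intro v _
              simp [SimpleGraph.adj_comm]
            rw [this, filter_adj_eq hn u.1 u.2, nbrs_card hn u.1 u.2]
            norm_num
        _ = ∑ v, f v + ∑ u : Fin n × Fin 4,
              ∑ v ∈ Finset.univ.filter (fun v => (polytopeD n).Adj v u), f u := by
            simp [Finset.sum_const, mul_comm]
        _ = ∑ v, f v + ∑ v : Fin n × Fin 4,
              ∑ u ∈ Finset.univ.filter (fun u => (polytopeD n).Adj v u), f u := by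
            congr 1
            simp only [Finset.sum_filter]
            exact Finset.sum_comm
        _ = ∑ v, closedSum (polytopeD n) f v := by
            rw [← Finset.sum_add_distrib]
            refine Finset.sum_congr rfl fun v _ => ?_
            simp [closedSum]
        _ = 0 := h0
    have : ∑ v, f v = 0 := by linarith
    simp [this]
end

section
/- For every n ≥ 5, the convex polytope graph R_n'' is d-balanced, i.e., its balanced domination number equals 0. -/
open Finset

/-- The convex polytope graph `R'' n`: six layers a,b,c,d,e,f of `n` vertices with edges
a_i a_{i+1}, f_i f_{i+1}, a_i b_i, b_i c_i, c_i d_i, d_i e_i, e_i f_i,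
b_{i+1} c_i, d_i e_{i+1} (indices mod n). -/
def polytopeR'' (n : ℕ) : SimpleGraph (Fin n × Fin 6) :=
  SimpleGraph.fromRel (fun p q =>
    (p.2 = q.2 ∧ ((p.2 : ℕ) = 0 ∨ (p.2 : ℕ) = 5) ∧ (q.1 : ℕ) = ((p.1 : ℕ) + 1) % n) ∨
    ((p.1 = q.1) ∧ (p.2 : ℕ) + 1 = (q.2 : ℕ)) ∨
    ((p.2 : ℕ) = 2 ∧ (q.2 : ℕ) = 1 ∧ (q.1 : ℕ) = ((p.1 : ℕ) + 1) % n) ∨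
    ((p.2 : ℕ) = 3 ∧ (q.2 : ℕ) = 4 ∧ (q.1 : ℕ) = ((p.1 : ℕ) + 1) % n))

section Aux

variable {n : ℕ}

lemma aux_mod_facts (hn : 5 ≤ n) (m : ℕ) (hm : m < n) :
    ((m + 1 < n ∧ (m + 1) % n = m + 1) ∨ (m + 1 = n ∧ (m + 1) % n = 0)) ∧
    ((1 ≤ m ∧ (m + (n - 1)) % n = m - 1) ∨ (m = 0 ∧ (m + (n - 1)) % n = n - 1)) := by
  constructor
  · rcases Nat.lt_or_ge (m + 1) n with h | h
    · exact Or.inl ⟨h, Nat.mod_eq_of_lt h⟩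
    · have h' : m + 1 = n := by omega
      exact Or.inr ⟨h', by simp [h']⟩
  · rcases Nat.eq_zero_or_pos m with h | h
    · refine Or.inr ⟨h, ?_⟩
      subst h
      simpa using Nat.mod_eq_of_lt (show n - 1 < n by omega)
    · refine Or.inl ⟨h, ?_⟩
      have e : m + (n - 1) = n + (m - 1) := by omega
      rw [e, Nat.add_mod_left]
      exact Nat.mod_eq_of_lt (by omega)

lemma aux_val_add_one [NeZero n] (hn : 2 ≤ n) (i : Fin n) :
    ((i + 1 : Fin n) : ℕ) = ((i : ℕ) + 1) % n := by
  rw [Fin.add_def]; simp [Fin.val_one', Nat.add_mod_mod]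

lemma aux_val_sub_one [NeZero n] (hn : 2 ≤ n) (i : Fin n) :
    ((i - 1 : Fin n) : ℕ) = ((i : ℕ) + (n - 1)) % n := by
  rw [Fin.sub_def]
  have h1 : 1 % n = 1 := Nat.mod_eq_of_lt (by omega)
  simp [h1, Nat.add_comm]

open scoped Classical in
/-- Every vertex of `polytopeR'' n` has degree 3 (for `n ≥ 5`). -/
lemma aux_deg_three (hn : 5 ≤ n) (u : Fin n × Fin 6) :
    (Finset.univ.filter (fun v => (polytopeR'' n).Adj u v)).card = 3 := by
  haveI : NeZero n := ⟨by omega⟩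
  obtain ⟨i, j⟩ := u
  have hadd := aux_val_add_one (n := n) (by omega) i
  have hsub := aux_val_sub_one (n := n) (by omega) i
  obtain ⟨H1, H2⟩ := aux_mod_facts hn (i : ℕ) i.isLt
  have hiv : (i : ℕ) < n := i.isLt
  have key : ∀ N : Finset (Fin n × Fin 6),
      (∀ q, q ∈ N ↔ (polytopeR'' n).Adj (i, j) q) → N.card = 3 →
      (Finset.univ.filter (fun v => (polytopeR'' n).Adj (i, j) v)).card = 3 := by
    intro N hN hc
    rw [show Finset.univ.filter (fun v => (polytopeR'' n).Adj (i, j) v) = N from ?_]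
    · exact hc
    · ext q; simp [hN]
  fin_cases j
  · refine key {(i + 1, 0), (i - 1, 0), (i, 1)} ?_ ?_
    · rintro ⟨i', j'⟩
      obtain ⟨H1', H2'⟩ := aux_mod_facts hn (i' : ℕ) i'.isLt
      have hiv' : (i' : ℕ) < n := i'.isLt
      have hadd' := aux_val_add_one (n := n) (by omega) i'
      have hsub' := aux_val_sub_one (n := n) (by omega) i'
      fin_cases j' <;>
        simp only [polytopeR'', SimpleGraph.fromRel_adj, Finset.mem_insert,
          Finset.mem_singleton, Prod.mk.injEq, ne_eq, Fin.ext_iff, hadd, hsub, hadd', hsub'] <;>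
        simp <;> omega
    · rw [Finset.card_insert_of_notMem (by
          simp only [Finset.mem_insert, Finset.mem_singleton, Prod.mk.injEq, Fin.ext_iff,
            hadd, hsub]
          simp <;> omega),
        Finset.card_insert_of_notMem (by
          simp only [Finset.mem_singleton, Prod.mk.injEq, Fin.ext_iff, hadd, hsub]
          simp <;> omega),
        Finset.card_singleton]
  · refine key {(i, 0), (i, 2), (i - 1, 2)} ?_ ?_
    · rintro ⟨i', j'⟩
      obtain ⟨H1', H2'⟩ := aux_mod_facts hn (i' : ℕ) i'.isLt
      have hiv' : (i' : ℕ) < n := i'.isLt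
      have hadd' := aux_val_add_one (n := n) (by omega) i'
      have hsub' := aux_val_sub_one (n := n) (by omega) i'
      fin_cases j' <;>
        simp only [polytopeR'', SimpleGraph.fromRel_adj, Finset.mem_insert,
          Finset.mem_singleton, Prod.mk.injEq, ne_eq, Fin.ext_iff, hadd, hsub, hadd', hsub'] <;>
        simp <;> omega
    · rw [Finset.card_insert_of_notMem (by
          simp only [Finset.mem_insert, Finset.mem_singleton, Prod.mk.injEq, Fin.ext_iff,
            hadd, hsub]
          simp <;> omega),
        Finset.card_insert_of_notMem (by
          simp only [Finset.mem_singleton, Prod.mk.injEq, Fin.ext_iff, hadd, hsub]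
          simp <;> omega),
        Finset.card_singleton]
  · refine key {(i, 1), (i + 1, 1), (i, 3)} ?_ ?_
    · rintro ⟨i', j'⟩
      obtain ⟨H1', H2'⟩ := aux_mod_facts hn (i' : ℕ) i'.isLt
      have hiv' : (i' : ℕ) < n := i'.isLt
      have hadd' := aux_val_add_one (n := n) (by omega) i'
      have hsub' := aux_val_sub_one (n := n) (by omega) i'
      fin_cases j' <;>
        simp only [polytopeR'', SimpleGraph.fromRel_adj, Finset.mem_insert,
          Finset.mem_singleton, Prod.mk.injEq, ne_eq, Fin.ext_iff, hadd, hsub, hadd', hsub'] <;>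
        simp <;> omega
    · rw [Finset.card_insert_of_notMem (by
          simp only [Finset.mem_insert, Finset.mem_singleton, Prod.mk.injEq, Fin.ext_iff,
            hadd, hsub]
          simp <;> omega),
        Finset.card_insert_of_notMem (by
          simp only [Finset.mem_singleton, Prod.mk.injEq, Fin.ext_iff, hadd, hsub]
          simp <;> omega),
        Finset.card_singleton]
  · refine key {(i, 2), (i, 4), (i + 1, 4)} ?_ ?_
    · rintro ⟨i', j'⟩
      obtain ⟨H1', H2'⟩ := aux_mod_facts hn (i' : ℕ) i'.isLt
      have hiv' : (i' : ℕ) < n := i'.isLt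
      have hadd' := aux_val_add_one (n := n) (by omega) i'
      have hsub' := aux_val_sub_one (n := n) (by omega) i'
      fin_cases j' <;>
        simp only [polytopeR'', SimpleGraph.fromRel_adj, Finset.mem_insert,
          Finset.mem_singleton, Prod.mk.injEq, ne_eq, Fin.ext_iff, hadd, hsub, hadd', hsub'] <;>
        simp <;> omega
    · rw [Finset.card_insert_of_notMem (by
          simp only [Finset.mem_insert, Finset.mem_singleton, Prod.mk.injEq, Fin.ext_iff,
            hadd, hsub]
          simp <;> omega),
        Finset.card_insert_of_notMem (by
          simp only [Finset.mem_singleton, Prod.mk.injEq, Fin.ext_iff, hadd, hsub]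
          simp <;> omega),
        Finset.card_singleton]
  · refine key {(i, 3), (i - 1, 3), (i, 5)} ?_ ?_
    · rintro ⟨i', j'⟩
      obtain ⟨H1', H2'⟩ := aux_mod_facts hn (i' : ℕ) i'.isLt
      have hiv' : (i' : ℕ) < n := i'.isLt
      have hadd' := aux_val_add_one (n := n) (by omega) i'
      have hsub' := aux_val_sub_one (n := n) (by omega) i'
      fin_cases j' <;>
        simp only [polytopeR'', SimpleGraph.fromRel_adj, Finset.mem_insert,
          Finset.mem_singleton, Prod.mk.injEq, ne_eq, Fin.ext_iff, hadd, hsub, hadd', hsub'] <;>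
        simp <;> omega
    · rw [Finset.card_insert_of_notMem (by
          simp only [Finset.mem_insert, Finset.mem_singleton, Prod.mk.injEq, Fin.ext_iff,
            hadd, hsub]
          simp <;> omega),
        Finset.card_insert_of_notMem (by
          simp only [Finset.mem_singleton, Prod.mk.injEq, Fin.ext_iff, hadd, hsub]
          simp <;> omega),
        Finset.card_singleton]
  · refine key {(i, 4), (i + 1, 5), (i - 1, 5)} ?_ ?_
    · rintro ⟨i', j'⟩
      obtain ⟨H1', H2'⟩ := aux_mod_facts hn (i' : ℕ) i'.isLt
      have hiv' : (i' : ℕ) < n := i'.isLt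
      have hadd' := aux_val_add_one (n := n) (by omega) i'
      have hsub' := aux_val_sub_one (n := n) (by omega) i'
      fin_cases j' <;>
        simp only [polytopeR'', SimpleGraph.fromRel_adj, Finset.mem_insert,
          Finset.mem_singleton, Prod.mk.injEq, ne_eq, Fin.ext_iff, hadd, hsub, hadd', hsub'] <;>
        simp <;> omega
    · rw [Finset.card_insert_of_notMem (by
          simp only [Finset.mem_insert, Finset.mem_singleton, Prod.mk.injEq, Fin.ext_iff,
            hadd, hsub]
          simp <;> omega),
        Finset.card_insert_of_notMem (by
          simp only [Finset.mem_singleton, Prod.mk.injEq, Fin.ext_iff, hadd, hsub]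
          simp <;> omega),
        Finset.card_singleton]

end Aux

/-- For every n ≥ 5 the convex polytope graph R_n'' is d-balanced. -/
theorem polytopeR''_d_balanced (n : ℕ) (hn : 5 ≤ n) :
    IsGreatest {w : ℤ | ∃ f : Fin n × Fin 6 → ℤ, IsBDF (polytopeR'' n) f ∧ w = ∑ v, f v} 0 := by
  classical
  constructor
  · exact ⟨fun _ => 0, ⟨fun v => Or.inr (Or.inl rfl), fun v => by simp [closedSum]⟩, by simp⟩
  · rintro w ⟨f, ⟨hrange, hcs⟩, rfl⟩
    have hzero : ∑ v, closedSum (polytopeR'' n) f v = 0 := by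
      simp [hcs]
    have hswap : ∑ v, closedSum (polytopeR'' n) f v = 4 * ∑ v, f v := by
      unfold closedSum
      rw [Finset.sum_add_distrib]
      have h2 : ∑ v : Fin n × Fin 6,
          ∑ u ∈ Finset.univ.filter (fun u => (polytopeR'' n).Adj v u), f u
          = 3 * ∑ v, f v := by
        have e1 : ∀ v : Fin n × Fin 6,
            ∑ u ∈ Finset.univ.filter (fun u => (polytopeR'' n).Adj v u), f u
            = ∑ u : Fin n × Fin 6, if (polytopeR'' n).Adj v u then f u else 0 := by
          intro v; rw [Finset.sum_filter]
        rw [Finset.sum_congr rfl (fun v _ => e1 v), Finset.sum_comm]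
        rw [Finset.mul_sum]
        refine Finset.sum_congr rfl (fun u _ => ?_)
        have e2 : ∑ v : Fin n × Fin 6, (if (polytopeR'' n).Adj v u then f u else 0)
            = ∑ v ∈ Finset.univ.filter (fun v => (polytopeR'' n).Adj u v), f u := by
          rw [Finset.sum_filter]
          refine Finset.sum_congr rfl (fun v _ => ?_)
          rw [SimpleGraph.adj_comm]
        rw [e2, Finset.sum_const, aux_deg_three hn u]
        push_cast
        ring
      rw [h2]; ring
    have h4 : (4 : ℤ) * ∑ v, f v = 0 := by rw [← hswap, hzero]
    have hs : ∑ v, f v = 0 := by linarith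
    simp [hs]
end

section
/- Let T be a rooted tree with root a_0 having children a_1,...,a_n (n ≥ 2), where a_i has l_i leaf children and no deeper descendants. If f is a balanced dominating function on T with x_0 = f(a_0) and x_i = f(a_i), then x_0 = (l_i − 1)·x_i for every i ∈ {1,...,n}, and the weight of f equals (1 − n)·x_0. -/
open Finset

/-- Vertices of the depth-two rooted tree: the root, the `n` children of the root,
and for each child `i` its `l i` leaf children. -/
abbrev TwoLevelVtx (n : ℕ) (l : Fin n → ℕ) : Type :=
  Unit ⊕ Fin n ⊕ (Σ i : Fin n, Fin (l i))

/-- The depth-two rooted tree: root adjacent to each child a_i, and each child a_i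
adjacent to its l_i leaves. -/
def twoLevelTree (n : ℕ) (l : Fin n → ℕ) : SimpleGraph (TwoLevelVtx n l) :=
  SimpleGraph.fromRel (fun p q =>
    (p = Sum.inl () ∧ ∃ i : Fin n, q = Sum.inr (Sum.inl i)) ∨
    (∃ (i : Fin n) (j : Fin (l i)), p = Sum.inr (Sum.inl i) ∧ q = Sum.inr (Sum.inr ⟨i, j⟩)))


private lemma closedSum_root (n : ℕ) (l : Fin n → ℕ) (f : TwoLevelVtx n l → ℤ) :
    closedSum (twoLevelTree n l) f (Sum.inl ()) =
      f (Sum.inl ()) + ∑ i : Fin n, f (Sum.inr (Sum.inl i)) := by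
  classical
  rw [closedSum, Finset.sum_filter]
  simp [Fintype.sum_sum_type, twoLevelTree, SimpleGraph.fromRel_adj, Finset.sum_sigma']

private lemma closedSum_child (n : ℕ) (l : Fin n → ℕ) (f : TwoLevelVtx n l → ℤ) (i : Fin n) :
    closedSum (twoLevelTree n l) f (Sum.inr (Sum.inl i)) =
      f (Sum.inr (Sum.inl i)) + (f (Sum.inl ()) + ∑ j : Fin (l i), f (Sum.inr (Sum.inr ⟨i, j⟩))) := by
  classical
  rw [closedSum, Finset.sum_filter]
  simp only [Fintype.sum_sum_type, twoLevelTree, SimpleGraph.fromRel_adj]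
  simp [Sigma.ext_iff]
  rw [← Finset.univ_sigma_univ, Finset.sum_sigma]
  rw [Finset.sum_eq_single i]
  · simp
  · intro b _ hb
    refine Finset.sum_eq_zero fun j _ => if_neg ?_
    rintro ⟨rfl, -⟩; exact hb rfl
  · simp

private lemma closedSum_leaf (n : ℕ) (l : Fin n → ℕ) (f : TwoLevelVtx n l → ℤ)
    (i : Fin n) (j : Fin (l i)) :
    closedSum (twoLevelTree n l) f (Sum.inr (Sum.inr ⟨i, j⟩)) =
      f (Sum.inr (Sum.inr ⟨i, j⟩)) + f (Sum.inr (Sum.inl i)) := by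
  classical
  rw [closedSum, Finset.sum_filter]
  simp only [Fintype.sum_sum_type, twoLevelTree, SimpleGraph.fromRel_adj]
  simp [Sigma.ext_iff]
  rw [Finset.sum_eq_single i]
  · simp
  · intro b _ hb
    exact if_neg (by rintro ⟨rfl, -⟩; exact hb rfl)
  · simp

/-- For a BDF `f` on a depth-two rooted tree with `n ≥ 2` children of the root,
`f(root) = (l_i - 1)·f(a_i)` for each child `a_i`, and the weight equals `(1-n)·f(root)`. -/
theorem twoLevelTree_bdf_weight (n : ℕ) (hn : 2 ≤ n) (l : Fin n → ℕ)
    (f : TwoLevelVtx n l → ℤ) (hf : IsBDF (twoLevelTree n l) f) :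
    (∀ i : Fin n, f (Sum.inl ()) = ((l i : ℤ) - 1) * f (Sum.inr (Sum.inl i))) ∧
      ∑ v, f v = (1 - (n : ℤ)) * f (Sum.inl ()) := by
  classical
  obtain ⟨-, hz⟩ := hf
  have hleaf : ∀ (i : Fin n) (j : Fin (l i)),
      f (Sum.inr (Sum.inr ⟨i, j⟩)) = -f (Sum.inr (Sum.inl i)) := by
    intro i j
    have := hz (Sum.inr (Sum.inr ⟨i, j⟩))
    rw [closedSum_leaf] at this
    linarith
  have hchild : ∀ i : Fin n,
      f (Sum.inr (Sum.inl i)) + (f (Sum.inl ()) +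
        ∑ j : Fin (l i), f (Sum.inr (Sum.inr ⟨i, j⟩))) = 0 := by
    intro i
    have := hz (Sum.inr (Sum.inl i))
    rwa [closedSum_child] at this
  have hsumleaf : ∀ i : Fin n,
      ∑ j : Fin (l i), f (Sum.inr (Sum.inr ⟨i, j⟩)) = -(l i : ℤ) * f (Sum.inr (Sum.inl i)) := by
    intro i
    simp [hleaf i, mul_comm]
  have h1 : ∀ i : Fin n, f (Sum.inl ()) = ((l i : ℤ) - 1) * f (Sum.inr (Sum.inl i)) := by
    intro i
    have h := hchild i
    rw [hsumleaf i] at h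
    ring_nf
    ring_nf at h
    linarith
  refine ⟨h1, ?_⟩
  have hroot := hz (Sum.inl ())
  rw [closedSum_root] at hroot
  have hsum : (∑ v, f v) = f (Sum.inl ()) + ((∑ i : Fin n, f (Sum.inr (Sum.inl i))) +
      ∑ i : Fin n, ∑ j : Fin (l i), f (Sum.inr (Sum.inr ⟨i, j⟩))) := by
    rw [Fintype.sum_sum_type, Fintype.sum_sum_type]
    simp [Finset.sum_sigma']
  rw [hsum]
  have h2 : ∑ i : Fin n, ∑ j : Fin (l i), f (Sum.inr (Sum.inr ⟨i, j⟩)) =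
      ∑ i : Fin n, (-f (Sum.inr (Sum.inl i)) - f (Sum.inl ())) := by
    refine Finset.sum_congr rfl fun i _ => ?_
    have := hchild i
    linarith
  rw [h2, Finset.sum_sub_distrib, Finset.sum_const, Finset.sum_neg_distrib]
  simp only [Finset.card_univ, Fintype.card_fin, nsmul_eq_mul]
  linarith
end

section
/- If f is a balanced dominating function on a full binary tree T with root r, then f(r) = 0. -/
/-- Full binary trees: every vertex has exactly 0 or 2 children. -/
inductive FBT where
  | leaf : FBT
  | node : FBT → FBT → FBT

/-- Vertices (positions) of a full binary tree. -/
inductive FBT.Pos : FBT → Type where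
  | here : ∀ t, FBT.Pos t
  | left : ∀ {s t : FBT}, FBT.Pos s → FBT.Pos (FBT.node s t)
  | right : ∀ {s t : FBT}, FBT.Pos t → FBT.Pos (FBT.node s t)

/-- `BalancedFrom t f par` says: every vertex of `t` has zero closed-neighborhood sum
for the labeling `f`, where `par` is the label of the parent of the root of `t`
(take `par = 0` for the whole tree). -/
def FBT.BalancedFrom : (t : FBT) → (FBT.Pos t → ℤ) → ℤ → Prop
  | .leaf, f, par => par + f (.here _) = 0
  | .node s u, f, par =>
      (par + f (.here _) + f (.left (.here s)) + f (.right (.here u)) = 0) ∧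
      FBT.BalancedFrom s (fun p => f (.left p)) (f (.here _)) ∧
      FBT.BalancedFrom u (fun p => f (.right p)) (f (.here _))

/-- A balanced dominating function on a full binary tree: labels in {-1,0,1} with
zero closed-neighborhood sum at every vertex. -/
def FBT.IsBDF (t : FBT) (f : FBT.Pos t → ℤ) : Prop :=
  (∀ p, f p = -1 ∨ f p = 0 ∨ f p = 1) ∧ FBT.BalancedFrom t f 0


lemma FBT.bdf_parity : ∀ (t : FBT) (f : FBT.Pos t → ℤ) (par : ℤ),
    FBT.BalancedFrom t f par → 2 ∣ f (.here t) + par := by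
  intro t
  induction t with
  | leaf =>
    intro f par h
    simp only [FBT.BalancedFrom] at h
    omega
  | node s u ihs ihu =>
    intro f par h
    obtain ⟨heq, hs, hu⟩ := h
    have h1 := ihs _ _ hs
    have h2 := ihu _ _ hu
    omega

/-- If f is a balanced dominating function on a full binary tree with root r,
then f(r) = 0. -/
theorem FBT.bdf_root_eq_zero (t : FBT) (f : FBT.Pos t → ℤ) (hf : FBT.IsBDF t f) :
    f (.here t) = 0 := by
  have h := FBT.bdf_parity t f 0 hf.2
  have h2 := hf.1 (.here t)
  omega
end

section
/- Every full binary tree is d-balanced; moreover, the only balanced dominating function on a full binary tree is the identically zero function. -/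
/-- The total weight of a labeling of a full binary tree. -/
def FBT.weight : (t : FBT) → (FBT.Pos t → ℤ) → ℤ
  | .leaf, f => f (.here _)
  | .node s u, f =>
      f (.here _) + FBT.weight s (fun p => f (.left p)) + FBT.weight u (fun p => f (.right p))

def FBT.sgn : FBT → ℤ
  | .leaf => -1
  | .node s u => if FBT.sgn s = -1 ∧ FBT.sgn u = -1 then 1 else -1

lemma FBT.sgn_cases (t : FBT) : t.sgn = 1 ∨ t.sgn = -1 := by
  cases t with
  | leaf => right; rfl
  | node s u => unfold FBT.sgn; split <;> simp

lemma FBT.key : ∀ (t : FBT) (f : FBT.Pos t → ℤ) (par : ℤ),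
    (∀ p, f p = -1 ∨ f p = 0 ∨ f p = 1) → (par = -1 ∨ par = 0 ∨ par = 1) →
    FBT.BalancedFrom t f par →
    f (.here t) = t.sgn * par ∧ (par = 0 → ∀ p, f p = 0) := by
  intro t
  induction t with
  | leaf =>
    intro f par hv hp hb
    simp only [FBT.BalancedFrom] at hb
    constructor
    · rw [show FBT.sgn .leaf = -1 from rfl]; omega
    · intro h0 p
      cases p
      omega
  | node s u ihs ihu =>
    intro f par hv hp hb
    obtain ⟨heq, hs, hu⟩ := hb
    have ha := hv (.here _)
    obtain ⟨hL, hL0⟩ := ihs (fun p => f (.left p)) (f (.here _)) (fun p => hv _) ha hs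
    obtain ⟨hR, hR0⟩ := ihu (fun p => f (.right p)) (f (.here _)) (fun p => hv _) ha hu
    have hL : f (.left (.here s)) = s.sgn * f (.here _) := hL
    have hR : f (.right (.here u)) = u.sgn * f (.here _) := hR
    have hss := FBT.sgn_cases s
    have hsu := FBT.sgn_cases u
    have hroot : f (.here (FBT.node s u)) = (FBT.node s u).sgn * par := by
      unfold FBT.sgn
      split
      · rename_i h
        obtain ⟨h1, h2⟩ := h
        rw [h1] at hL; rw [h2] at hR
        omega
      · rename_i h
        rcases hss with h1 | h1 <;> rcases hsu with h2 | h2 <;>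
          rw [h1] at hL <;> rw [h2] at hR <;> simp [h1, h2] at h ⊢ <;> omega
    refine ⟨hroot, fun h0 p => ?_⟩
    have ha0 : f (.here (FBT.node s u)) = 0 := by
      rcases FBT.sgn_cases (FBT.node s u) with h | h <;> rw [h] at hroot <;> omega
    cases p with
    | here => exact ha0
    | left q => exact hL0 ha0 q
    | right q => exact hR0 ha0 q

lemma FBT.zero_bal : ∀ t : FBT, FBT.BalancedFrom t (fun _ => 0) 0 := by
  intro t
  induction t with
  | leaf => simp [FBT.BalancedFrom]
  | node s u ihs ihu => exact ⟨by simp, ihs, ihu⟩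

lemma FBT.weight_zero : ∀ (t : FBT) (f : FBT.Pos t → ℤ), (∀ p, f p = 0) → FBT.weight t f = 0 := by
  intro t
  induction t with
  | leaf => intro f h; exact h _
  | node s u ihs ihu =>
    intro f h
    simp [FBT.weight, h (.here _), ihs _ (fun p => h _), ihu _ (fun p => h _)]

/-- Every full binary tree is d-balanced; moreover the only balanced dominating
function on a full binary tree is the identically zero function. -/
theorem FBT.d_balanced (t : FBT) :
    (∀ f : FBT.Pos t → ℤ, FBT.IsBDF t f → ∀ p, f p = 0) ∧
      IsGreatest {w : ℤ | ∃ f : FBT.Pos t → ℤ, FBT.IsBDF t f ∧ w = FBT.weight t f} 0 := by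
  have hz : ∀ f : FBT.Pos t → ℤ, FBT.IsBDF t f → ∀ p, f p = 0 := fun f hf =>
    (FBT.key t f 0 hf.1 (Or.inr (Or.inl rfl)) hf.2).2 rfl
  refine ⟨hz, ?_, ?_⟩
  · exact ⟨fun _ => 0, ⟨fun p => Or.inr (Or.inl rfl), FBT.zero_bal t⟩,
      (FBT.weight_zero t _ fun _ => rfl).symm⟩
  · rintro w ⟨f, hf, rfl⟩
    rw [FBT.weight_zero t f (hz f hf)]
end

section
/- Let f be a modified balanced dominating function on the caterpillar graph C_n (n ≥ 2) with spine labels x_1,...,x_n, where x_i ∈ {-1,1} whenever l_i ≠ 1. Then l_1 = 1 + x_1 x_2, l_n = 1 + x_{n−1} x_n, and l_i = 1 + x_{i−1} x_i + x_i x_{i+1} for all 2 ≤ i ≤ n−1. -/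
open Finset

/-- Vertices of the caterpillar: `n` spine vertices plus `l i` leaves attached to spine vertex `i`. -/
abbrev CatVtx (n : ℕ) (l : Fin n → ℕ) : Type :=
  Fin n ⊕ (Σ i : Fin n, Fin (l i))

/-- The caterpillar graph: a spine path a_1,...,a_n with `l i` leaves attached to `a_i`. -/
def caterpillar (n : ℕ) (l : Fin n → ℕ) : SimpleGraph (CatVtx n l) :=
  SimpleGraph.fromRel (fun p q =>
    (∃ i i' : Fin n, p = Sum.inl i ∧ q = Sum.inl i' ∧ (i' : ℕ) = (i : ℕ) + 1) ∨
    (∃ (i : Fin n) (j : Fin (l i)), p = Sum.inl i ∧ q = Sum.inr ⟨i, j⟩))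

/-- A modified balanced dominating function on the caterpillar: a BDF whose spine
labels are in {-1,1} at every spine vertex with `l i ≠ 1`. -/
def IsMBDF (n : ℕ) (l : Fin n → ℕ) (f : CatVtx n l → ℤ) : Prop :=
  IsBDF (caterpillar n l) f ∧
    ∀ i : Fin n, l i ≠ 1 → (f (Sum.inl i) = -1 ∨ f (Sum.inl i) = 1)

theorem adj_leaf (n : ℕ) (l : Fin n → ℕ) (i : Fin n) (j : Fin (l i)) (u : CatVtx n l) :
    (caterpillar n l).Adj (Sum.inr ⟨i,j⟩) u ↔ u = Sum.inl i := by
  simp only [caterpillar, SimpleGraph.fromRel_adj]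
  constructor
  · rintro ⟨-, h⟩
    rcases h with (⟨a,b,h1,h2,h3⟩|⟨a,b,h1,h2⟩) | (⟨a,b,h1,h2,h3⟩|⟨a,b,h1,h2⟩) <;> simp_all
  · rintro rfl
    exact ⟨by simp, Or.inr (Or.inr ⟨i, j, rfl, rfl⟩)⟩

theorem adj_spine (n : ℕ) (l : Fin n → ℕ) (i k : Fin n) :
    (caterpillar n l).Adj (Sum.inl i) (Sum.inl k) ↔ ((k:ℕ) = i + 1 ∨ (i:ℕ) = k + 1) := by
  simp only [caterpillar, SimpleGraph.fromRel_adj]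
  constructor
  · rintro ⟨-, h⟩
    rcases h with (⟨a,b,h1,h2,h3⟩|⟨a,b,h1,h2⟩) | (⟨a,b,h1,h2,h3⟩|⟨a,b,h1,h2⟩) <;> simp_all
  · rintro (h | h)
    · exact ⟨by simp [Fin.ext_iff]; omega, Or.inl (Or.inl ⟨i, k, rfl, rfl, h⟩)⟩
    · exact ⟨by simp [Fin.ext_iff]; omega, Or.inr (Or.inl ⟨k, i, rfl, rfl, h⟩)⟩

theorem adj_spine_leaf (n : ℕ) (l : Fin n → ℕ) (i i' : Fin n) (j : Fin (l i')) :
    (caterpillar n l).Adj (Sum.inl i) (Sum.inr ⟨i',j⟩) ↔ i' = i := by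
  simp only [caterpillar, SimpleGraph.fromRel_adj]
  constructor
  · rintro ⟨-, h⟩
    rcases h with (⟨a,b,h1,h2,h3⟩|⟨a,b,h1,h2⟩) | (⟨a,b,h1,h2,h3⟩|⟨a,b,h1,h2⟩) <;> simp_all
  · rintro rfl
    exact ⟨by simp, Or.inl (Or.inr ⟨i', j, rfl, rfl⟩)⟩

theorem leaf_val (n : ℕ) (l : Fin n → ℕ) (f : CatVtx n l → ℤ)
    (hs : ∀ v, closedSum (caterpillar n l) f v = 0) (i : Fin n) (j : Fin (l i)) :
    f (Sum.inr ⟨i,j⟩) = - f (Sum.inl i) := by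
  have h := hs (Sum.inr ⟨i,j⟩)
  rw [closedSum] at h
  classical
  have hfil : (Finset.univ.filter (fun u => (caterpillar n l).Adj (Sum.inr ⟨i,j⟩) u)) = {Sum.inl i} := by
    ext u; simp [adj_leaf]
  rw [hfil] at h
  simp at h
  linarith

theorem spine_eq (n : ℕ) (l : Fin n → ℕ) (f : CatVtx n l → ℤ)
    (hs : ∀ v, closedSum (caterpillar n l) f v = 0) (i : Fin n) :
    f (Sum.inl i) + (∑ k : Fin n, if ((k:ℕ) = (i:ℕ)+1 ∨ (i:ℕ) = (k:ℕ)+1) then f (Sum.inl k) else 0)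
      = (l i : ℤ) * f (Sum.inl i) := by
  have h := hs (Sum.inl i)
  rw [closedSum] at h
  classical
  rw [Finset.sum_filter, Fintype.sum_sum_type] at h
  simp only [adj_spine, adj_spine_leaf] at h
  rw [← Finset.univ_sigma_univ, Finset.sum_sigma] at h
  simp only [adj_spine_leaf] at h
  have hrw : ∀ i' : Fin n, (∑ j : Fin (l i'), if i' = i then f (Sum.inr ⟨i',j⟩) else 0)
      = if i' = i then ∑ j : Fin (l i'), f (Sum.inr ⟨i',j⟩) else 0 := by
    intro i'; split_ifs <;> simp
  rw [Finset.sum_congr rfl (fun i' _ => hrw i'), Finset.sum_ite_eq' Finset.univ i] at h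
  simp only [Finset.mem_univ, if_true] at h
  have hl : (∑ j : Fin (l i), f (Sum.inr ⟨i,j⟩)) = (l i : ℤ) * (- f (Sum.inl i)) := by
    rw [Finset.sum_congr rfl (fun j _ => leaf_val n l f hs i j)]
    simp [mul_comm]
  rw [hl] at h
  linarith

theorem fin_eq_mk_iff (n c : ℕ) (h : c < n) (k : Fin n) : k = ⟨c, h⟩ ↔ (k:ℕ) = c := by
  rw [Fin.ext_iff]

theorem key_alg (L : ℕ) (x s : ℤ) (heq : x + s = L * x)
    (hx : x = -1 ∨ x = 0 ∨ x = 1) (hL : L ≠ 1 → (x = -1 ∨ x = 1)) :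
    (L : ℤ) = 1 + x * s := by
  by_cases h1 : L = 1
  · subst h1
    have : s = 0 := by push_cast at heq; linarith
    simp [this]
  · rcases hL h1 with h | h <;> subst h <;> push_cast at heq <;> linarith

/-- For an MBDF on the caterpillar C_n (n ≥ 2) with spine labels x_i = f(a_i):
l_1 = 1 + x_1 x_2, l_n = 1 + x_{n-1} x_n, and
l_i = 1 + x_{i-1} x_i + x_i x_{i+1} for interior spine vertices. -/
theorem caterpillar_leaf_formulas (n : ℕ) (hn : 2 ≤ n) (l : Fin n → ℕ)
    (f : CatVtx n l → ℤ) (hf : IsMBDF n l f) :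
    ((l ⟨0, by omega⟩ : ℤ) =
        1 + f (Sum.inl ⟨0, by omega⟩) * f (Sum.inl ⟨1, by omega⟩)) ∧
    ((l ⟨n - 1, by omega⟩ : ℤ) =
        1 + f (Sum.inl ⟨n - 2, by omega⟩) * f (Sum.inl ⟨n - 1, by omega⟩)) ∧
    (∀ (i : ℕ) (_h1 : 1 ≤ i) (_h2 : i ≤ n - 2),
      (l ⟨i, by omega⟩ : ℤ) =
        1 + f (Sum.inl ⟨i - 1, by omega⟩) * f (Sum.inl ⟨i, by omega⟩) +
          f (Sum.inl ⟨i, by omega⟩) * f (Sum.inl ⟨i + 1, by omega⟩)) := by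
  classical
  obtain ⟨⟨hrange, hsum⟩, hmod⟩ := hf
  have hse := spine_eq n l f hsum
  refine ⟨?_, ?_, ?_⟩
  · -- i = 0
    have key : ∀ c : Fin n, (c:ℕ) = 0 →
        (l c : ℤ) = 1 + f (Sum.inl c) * f (Sum.inl ⟨1, by omega⟩) := by
      intro c hc
      have h := hse c
      have hsum1 : (∑ k : Fin n, if ((k:ℕ) = (c:ℕ)+1 ∨ (c:ℕ) = (k:ℕ)+1) then f (Sum.inl k) else 0)
          = f (Sum.inl ⟨1, by omega⟩) := by
        have step : ∀ k ∈ (Finset.univ : Finset (Fin n)),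
            (if ((k:ℕ) = (c:ℕ)+1 ∨ (c:ℕ) = (k:ℕ)+1) then f (Sum.inl k) else 0)
            = (if k = (⟨1, by omega⟩ : Fin n) then f (Sum.inl k) else 0) := by
          intro k _
          exact if_congr (by rw [fin_eq_mk_iff]; omega) rfl rfl
        refine (Finset.sum_congr rfl step).trans ?_
        simp
      rw [hsum1] at h
      exact key_alg _ _ _ h (hrange _) (hmod _)
    exact key ⟨0, by omega⟩ rfl
  · -- i = n-1
    have key : ∀ c : Fin n, (c:ℕ) = n - 1 →
        (l c : ℤ) = 1 + f (Sum.inl c) * f (Sum.inl ⟨n-2, by omega⟩) := by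
      intro c hc
      have h := hse c
      have hsum1 : (∑ k : Fin n, if ((k:ℕ) = (c:ℕ)+1 ∨ (c:ℕ) = (k:ℕ)+1) then f (Sum.inl k) else 0)
          = f (Sum.inl ⟨n-2, by omega⟩) := by
        have step : ∀ k ∈ (Finset.univ : Finset (Fin n)),
            (if ((k:ℕ) = (c:ℕ)+1 ∨ (c:ℕ) = (k:ℕ)+1) then f (Sum.inl k) else 0)
            = (if k = (⟨n-2, by omega⟩ : Fin n) then f (Sum.inl k) else 0) := by
          intro k _
          refine if_congr ?_ rfl rfl
          rw [fin_eq_mk_iff]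
          have hk := k.2
          omega
        refine (Finset.sum_congr rfl step).trans ?_
        simp
      rw [hsum1] at h
      exact key_alg _ _ _ h (hrange _) (hmod _)
    exact (key ⟨n-1, by omega⟩ rfl).trans (by ring)
  · -- interior
    intro i h1 h2
    have key : ∀ c : Fin n, (c:ℕ) = i →
        (l c : ℤ) = 1 + f (Sum.inl c) *
          (f (Sum.inl ⟨i+1, by omega⟩) + f (Sum.inl ⟨i-1, by omega⟩)) := by
      intro c hc
      have h := hse c
      have hsum1 : (∑ k : Fin n, if ((k:ℕ) = (c:ℕ)+1 ∨ (c:ℕ) = (k:ℕ)+1) then f (Sum.inl k) else 0)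
          = f (Sum.inl ⟨i+1, by omega⟩) + f (Sum.inl ⟨i-1, by omega⟩) := by
        have step : ∀ k ∈ (Finset.univ : Finset (Fin n)),
            (if ((k:ℕ) = (c:ℕ)+1 ∨ (c:ℕ) = (k:ℕ)+1) then f (Sum.inl k) else 0)
            = (if k = (⟨i+1, by omega⟩ : Fin n) then f (Sum.inl k) else 0)
              + (if k = (⟨i-1, by omega⟩ : Fin n) then f (Sum.inl k) else 0) := by
          intro k _
          have hcond : ((k:ℕ) = (c:ℕ)+1 ∨ (c:ℕ) = (k:ℕ)+1)
              ↔ (k = (⟨i+1, by omega⟩ : Fin n) ∨ k = (⟨i-1, by omega⟩ : Fin n)) := by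
            rw [fin_eq_mk_iff, fin_eq_mk_iff]
            omega
          rw [if_congr hcond rfl rfl]
          by_cases hb : k = (⟨i+1, by omega⟩ : Fin n) <;>
            by_cases ha : k = (⟨i-1, by omega⟩ : Fin n)
          · exfalso
            have h' : (i + 1 : ℕ) = i - 1 := congrArg Fin.val (hb.symm.trans ha)
            omega
          · simp [hb, ha]
            omega
          · simp [hb, ha]
          · simp [hb, ha]
        refine (Finset.sum_congr rfl step).trans ?_
        rw [Finset.sum_add_distrib]
        simp
      rw [hsum1] at h
      exact key_alg _ _ _ h (hrange _) (hmod _)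
    exact (key ⟨i, by omega⟩ rfl).trans (by ring)
end

section
/- If a caterpillar graph C_n with n ≥ 2 spine vertices admits a non-zero modified balanced dominating function, then its total number of leaves L(C_n) satisfies L(C_n) ≡ 3n − 2 (mod 4). -/
open Finset

lemma adj_inr {n : ℕ} {l : Fin n → ℕ} (i : Fin n) (j : Fin (l i)) (u) :
    (caterpillar n l).Adj (Sum.inr ⟨i,j⟩) u ↔ u = Sum.inl i := by
  simp only [caterpillar, SimpleGraph.fromRel_adj]
  constructor
  · rintro ⟨hne, (⟨a,b,h1,h2,h3⟩|⟨a,b,h1,h2⟩)|(⟨a,b,h1,h2,h3⟩|⟨a,b,h1,h2⟩)⟩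
    · exact absurd h1 (by simp)
    · exact absurd h1 (by simp)
    · exact absurd h2 (by simp)
    · obtain ⟨rfl, -⟩ := Sigma.mk.inj_iff.mp (Sum.inr.inj h2)
      exact h1
  · rintro rfl
    exact ⟨by simp, Or.inr (Or.inr ⟨i, j, rfl, rfl⟩)⟩

lemma adj_inl_inl {n : ℕ} {l : Fin n → ℕ} (i i' : Fin n) :
    (caterpillar n l).Adj (Sum.inl i) (Sum.inl i') ↔ ((i':ℕ) = (i:ℕ)+1 ∨ (i:ℕ) = (i':ℕ)+1) := by
  simp only [caterpillar, SimpleGraph.fromRel_adj]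
  constructor
  · rintro ⟨hne, (⟨a,b,h1,h2,h3⟩|⟨a,b,h1,h2⟩)|(⟨a,b,h1,h2,h3⟩|⟨a,b,h1,h2⟩)⟩
    · rw [Sum.inl.inj h1, Sum.inl.inj h2]; omega
    · exact absurd h2 (by simp)
    · rw [Sum.inl.inj h1, Sum.inl.inj h2]; omega
    · exact absurd h2 (by simp)
  · intro h
    refine ⟨by rintro h'; rw [Sum.inl.inj h'] at h; omega, ?_⟩
    rcases h with h | h
    · exact Or.inl (Or.inl ⟨i, i', rfl, rfl, h⟩)
    · exact Or.inr (Or.inl ⟨i', i, rfl, rfl, h⟩)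

lemma adj_inl_inr {n : ℕ} {l : Fin n → ℕ} (i : Fin n) (x : Σ i : Fin n, Fin (l i)) :
    (caterpillar n l).Adj (Sum.inl i) (Sum.inr x) ↔ x.1 = i := by
  obtain ⟨a, b⟩ := x
  rw [(caterpillar n l).adj_comm, adj_inr]
  simp [eq_comm]

/-- spine values, 1-based, zero outside [1,n] -/
def sv (n : ℕ) (l : Fin n → ℕ) (f : CatVtx n l → ℤ) (j : ℕ) : ℤ :=
  if h : 1 ≤ j ∧ j ≤ n then f (Sum.inl ⟨j-1, by omega⟩) else 0

lemma sv_spine {n : ℕ} {l : Fin n → ℕ} (f : CatVtx n l → ℤ) (k : Fin n) :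
    sv n l f ((k:ℕ)+1) = f (Sum.inl k) := by
  rw [sv, dif_pos ⟨by omega, by omega⟩]
  exact congrArg (fun x => f (Sum.inl x)) (Fin.ext (by simp))

lemma sv_out {n : ℕ} {l : Fin n → ℕ} (f : CatVtx n l → ℤ) {j : ℕ}
    (h : j = 0 ∨ n < j) : sv n l f j = 0 := by
  rw [sv, dif_neg]; omega

lemma hleaf {n : ℕ} {l : Fin n → ℕ} {f : CatVtx n l → ℤ}
    (hf : IsBDF (caterpillar n l) f) (i : Fin n) (j : Fin (l i)) :
    f (Sum.inr ⟨i, j⟩) = - f (Sum.inl i) := by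
  have h := hf.2 (Sum.inr ⟨i, j⟩)
  rw [closedSum, Finset.sum_filter] at h
  simp only [adj_inr, Finset.sum_ite_eq', Finset.mem_univ, if_true] at h
  linarith

lemma spine_eq_s14 {n : ℕ} {l : Fin n → ℕ} {f : CatVtx n l → ℤ}
    (hf : IsBDF (caterpillar n l) f) (k : Fin n) :
    sv n l f (k:ℕ) + sv n l f ((k:ℕ)+2) + (1 - (l k : ℤ)) * sv n l f ((k:ℕ)+1) = 0 := by
  have h := hf.2 (Sum.inl k)
  rw [closedSum, Finset.sum_filter, Fintype.sum_sum_type] at h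
  rw [← Finset.univ_sigma_univ, Finset.sum_sigma] at h
  simp only [adj_inl_inl, adj_inl_inr] at h
  -- sigma part
  have hsig : ∀ a : Fin n, (∑ b : Fin (l a),
      if ((⟨a, b⟩ : Σ i : Fin n, Fin (l i)).1 = k) then f (Sum.inr ⟨a, b⟩) else 0)
      = if a = k then ∑ b : Fin (l a), f (Sum.inr ⟨a, b⟩) else 0 := by
    intro a
    split_ifs with hak
    · exact Finset.sum_congr rfl (fun b _ => by simp [hak])
    · exact Finset.sum_eq_zero (fun b _ => by simp [hak])
  rw [Finset.sum_congr rfl (fun a _ => hsig a)] at h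
  rw [Finset.sum_ite_eq' Finset.univ k] at h
  simp only [Finset.mem_univ, if_true] at h
  have hlv : (∑ b : Fin (l k), f (Sum.inr ⟨k, b⟩)) = -((l k : ℤ) * f (Sum.inl k)) := by
    rw [Finset.sum_congr rfl (fun b _ => hleaf hf k b)]
    simp [Finset.sum_const, mul_comm]
  rw [hlv] at h
  -- spine neighbors part
  have hsplit : ∀ i' : Fin n,
      (if ((i':ℕ) = (k:ℕ)+1 ∨ (k:ℕ) = (i':ℕ)+1) then f (Sum.inl i') else 0)
      = (if (i':ℕ) = (k:ℕ)+1 then f (Sum.inl i') else 0)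
        + (if (i':ℕ) = (k:ℕ)-1 ∧ 1 ≤ (k:ℕ) then f (Sum.inl i') else 0) := by
    intro i'
    split_ifs <;> first | (exfalso; omega) | ring
  rw [Finset.sum_congr rfl (fun a _ => hsplit a), Finset.sum_add_distrib] at h
  have hA : ∀ m : ℕ, (∑ i' : Fin n, if (i':ℕ) = m then f (Sum.inl i') else 0)
      = sv n l f (m+1) := by
    intro m
    by_cases hm : m < n
    · rw [Finset.sum_eq_single_of_mem ⟨m, hm⟩ (Finset.mem_univ _)
        (fun b _ hb => by rw [if_neg]; intro hbm; exact hb (Fin.ext hbm))]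
      rw [if_pos rfl, sv, dif_pos ⟨by omega, by omega⟩]
      congr 1
    · rw [Finset.sum_eq_zero (fun b _ => by rw [if_neg]; omega), sv, dif_neg (by omega)]
  rw [hA ((k:ℕ)+1)] at h
  have hB : (∑ i' : Fin n, if (i':ℕ) = (k:ℕ)-1 ∧ 1 ≤ (k:ℕ) then f (Sum.inl i') else 0)
      = sv n l f (k:ℕ) := by
    by_cases hk : 1 ≤ (k:ℕ)
    · rw [Finset.sum_congr rfl (fun (a' : Fin n) (_ : a' ∈ Finset.univ) => show
        (if ((a':ℕ) = (k:ℕ)-1 ∧ 1 ≤ (k:ℕ)) then f (Sum.inl a') else 0)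
          = (if (a':ℕ) = (k:ℕ)-1 then f (Sum.inl a') else 0) from by
        split_ifs <;> first | (exfalso; omega) | rfl), hA ((k:ℕ)-1)]
      congr 1
      omega
    · rw [Finset.sum_eq_zero (fun b _ => by rw [if_neg]; omega), sv_out f (by omega)]
  rw [hB, ← sv_spine f k, show (k:ℕ)+1+1 = (k:ℕ)+2 from by omega] at h
  linarith

def Lv (n : ℕ) (l : Fin n → ℕ) (d : ℕ) : ℤ :=
  if h : d < n then (l ⟨d, h⟩ : ℤ) else 0


/-- If a caterpillar C_n (n ≥ 2) admits a non-zero modified balanced dominating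
function, then its total number of leaves satisfies L(C_n) ≡ 3n - 2 (mod 4). -/
theorem caterpillar_leaf_congruence (n : ℕ) (hn : 2 ≤ n) (l : Fin n → ℕ)
    (f : CatVtx n l → ℤ) (hf : IsMBDF n l f) (hnz : ∃ v, f v ≠ 0) :
    (∑ i : Fin n, (l i : ℤ)) % 4 = (3 * (n : ℤ) - 2) % 4 := by
  obtain ⟨m, rfl⟩ : ∃ m, n = m + 2 := ⟨n - 2, by omega⟩
  have hrange : ∀ j, sv (m+2) l f j = -1 ∨ sv (m+2) l f j = 0 ∨ sv (m+2) l f j = 1 := by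
    intro j; rw [sv]; split_ifs
    · exact hf.1.1 _
    · exact Or.inr (Or.inl rfl)
  have hspine : ∀ d, (hd : d < m+2) → sv (m+2) l f d + sv (m+2) l f (d+2)
      + (1 - Lv (m+2) l d) * sv (m+2) l f (d+1) = 0 := by
    intro d hd
    have h := spine_eq_s14 hf.1 ⟨d, hd⟩
    rw [Lv, dif_pos hd]
    exact h
  have hL : ∀ d, (hd : d < m+2) → Lv (m+2) l d
      = 1 + sv (m+2) l f (d+1) * (sv (m+2) l f d + sv (m+2) l f (d+2)) := by
    intro d hd
    have hsp := hspine d hd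
    rcases hrange (d+1) with h|h|h
    · rw [h] at hsp ⊢; linarith
    · have h0 : f (Sum.inl ⟨d, hd⟩) = 0 := by rw [← sv_spine f ⟨d, hd⟩]; exact h
      have hl1 : l ⟨d, hd⟩ = 1 := by
        by_contra hne
        rcases hf.2 ⟨d, hd⟩ hne with hv|hv <;> rw [h0] at hv <;> exact absurd hv (by norm_num)
      rw [Lv, dif_pos hd, hl1, h]
      norm_num
    · rw [h] at hsp ⊢; linarith
  have hnz' : ∃ j, 1 ≤ j ∧ j ≤ m+2 ∧ sv (m+2) l f j ≠ 0 := by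
    obtain ⟨v, hv⟩ := hnz
    rcases v with k | ⟨i, j⟩
    · refine ⟨(k:ℕ)+1, by omega, by have := k.isLt; omega, ?_⟩
      rw [sv_spine f k]; exact hv
    · refine ⟨(i:ℕ)+1, by omega, by have := i.isLt; omega, ?_⟩
      rw [sv_spine f i]
      intro h0
      rw [hleaf hf.1 i j, h0] at hv
      exact hv (by norm_num)
  have hno : ∀ j, j ≤ m+2 → ¬(sv (m+2) l f j = 0 ∧ sv (m+2) l f (j+1) = 0) := by
    rintro j0 hj0 ⟨h1, h2⟩
    have hright : ∀ d, sv (m+2) l f (j0 + d) = 0 ∧ sv (m+2) l f (j0 + d + 1) = 0 := by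
      intro d
      induction d with
      | zero => exact ⟨h1, h2⟩
      | succ d ih =>
        refine ⟨by rw [show j0+(d+1) = j0+d+1 from by omega]; exact ih.2, ?_⟩
        rw [show j0+(d+1)+1 = j0+d+2 from by omega]
        by_cases hc : j0 + d < m+2
        · have hsp := hspine (j0+d) hc
          rw [ih.1, ih.2] at hsp
          linarith
        · exact sv_out f (by omega)
    have hleft : ∀ d, sv (m+2) l f (j0 - d) = 0 ∧ sv (m+2) l f (j0 - d + 1) = 0 := by
      intro d
      induction d with
      | zero => exact ⟨h1, h2⟩
      | succ d ih =>
        by_cases hz : j0 - d = 0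
        · constructor
          · rw [show j0-(d+1) = 0 from by omega]; exact sv_out f (Or.inl rfl)
          · rw [show j0-(d+1)+1 = j0-d+1 from by omega]; exact ih.2
        · have hsp := hspine (j0-d-1) (by omega)
          rw [show j0-d-1+2 = j0-d+1 from by omega, show j0-d-1+1 = j0-d from by omega,
            ih.1, ih.2] at hsp
          constructor
          · rw [show j0-(d+1) = j0-d-1 from by omega]; linarith
          · rw [show j0-(d+1)+1 = j0-d from by omega]; exact ih.1
    obtain ⟨j, hj1, hjn, hjne⟩ := hnz'
    rcases le_or_gt j0 j with hle | hlt
    · have := (hright (j - j0)).1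
      rw [show j0 + (j - j0) = j from by omega] at this
      exact hjne this
    · have := (hleft (j0 - j)).1
      rw [show j0 - (j0 - j) = j from by omega] at this
      exact hjne this
  -- sum identities
  have hLsum : (∑ i : Fin (m+2), (l i : ℤ)) = ∑ d ∈ Finset.range (m+2), Lv (m+2) l d := by
    rw [← Fin.sum_univ_eq_sum_range (fun d => Lv (m+2) l d) (m+2)]
    refine Finset.sum_congr rfl (fun i _ => ?_)
    rw [Lv, dif_pos i.isLt]
  have hT : (∑ i : Fin (m+2), (l i : ℤ)) = ((m:ℤ)+2)
      + 2 * (∑ d ∈ Finset.range (m+1), sv (m+2) l f (d+1) * sv (m+2) l f (d+2)) := by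
    rw [hLsum, Finset.sum_congr rfl (fun d hd => hL d (Finset.mem_range.mp hd))]
    rw [Finset.sum_add_distrib, Finset.sum_const, Finset.card_range]
    simp only [mul_add]
    rw [Finset.sum_add_distrib]
    have e1 : (∑ d ∈ Finset.range (m+2), sv (m+2) l f (d+1) * sv (m+2) l f d)
        = ∑ d ∈ Finset.range (m+1), sv (m+2) l f (d+1) * sv (m+2) l f (d+2) := by
      rw [Finset.sum_range_succ']
      rw [sv_out f (Or.inl rfl), mul_zero, add_zero]
      exact Finset.sum_congr rfl (fun d _ => by rw [show d+1+1 = d+2 from rfl, mul_comm])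
    have e2 : (∑ d ∈ Finset.range (m+2), sv (m+2) l f (d+1) * sv (m+2) l f (d+2))
        = ∑ d ∈ Finset.range (m+1), sv (m+2) l f (d+1) * sv (m+2) l f (d+2) := by
      rw [Finset.sum_range_succ]
      have hz : sv (m+2) l f (m+1+2) = 0 := sv_out f (Or.inr (by omega))
      rw [hz, mul_zero, add_zero]
    rw [e1, e2]
    push_cast
    ring
  -- parity
  have hterm : ∀ j, j ≤ m+2 → (2:ℤ) ∣ (sv (m+2) l f j * sv (m+2) l f j
      + sv (m+2) l f (j+1) * sv (m+2) l f (j+1) - 1 - sv (m+2) l f j * sv (m+2) l f (j+1)) := by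
    intro j hj
    have hnoj := hno j hj
    rcases hrange j with h|h|h <;> rcases hrange (j+1) with h'|h'|h' <;> rw [h, h'] <;>
      first
      | (exfalso; exact hnoj ⟨h, h'⟩)
      | norm_num
  obtain ⟨c, hc⟩ : (2:ℤ) ∣ ((∑ d ∈ Finset.range (m+1), (sv (m+2) l f (d+1) * sv (m+2) l f (d+1)
      + sv (m+2) l f (d+2) * sv (m+2) l f (d+2) - 1))
      - ∑ d ∈ Finset.range (m+1), sv (m+2) l f (d+1) * sv (m+2) l f (d+2)) := by
    rw [← Finset.sum_sub_distrib]
    refine Finset.dvd_sum (fun d hd => ?_)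
    have hd' : d + 1 ≤ m+2 := by have := Finset.mem_range.mp hd; omega
    exact hterm (d+1) hd'
  have hone : ∀ j, sv (m+2) l f j ≠ 0 → sv (m+2) l f j * sv (m+2) l f j = 1 := by
    intro j hjne
    rcases hrange j with h|h|h
    · rw [h]; norm_num
    · exact absurd h hjne
    · rw [h]; norm_num
  have hu1 : sv (m+2) l f 1 * sv (m+2) l f 1 = 1 :=
    hone 1 (fun h => hno 0 (by omega) ⟨sv_out f (Or.inl rfl), h⟩)
  have hun : sv (m+2) l f (m+2) * sv (m+2) l f (m+2) = 1 :=
    hone (m+2) (fun h => hno (m+2) le_rfl ⟨h, sv_out f (Or.inr (by omega))⟩)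
  have hsum2 : (∑ d ∈ Finset.range (m+1), (sv (m+2) l f (d+1) * sv (m+2) l f (d+1)
      + sv (m+2) l f (d+2) * sv (m+2) l f (d+2) - 1))
      = 2 + 2 * (∑ d ∈ Finset.range m, sv (m+2) l f (d+2) * sv (m+2) l f (d+2)) - ((m:ℤ)+1) := by
    rw [Finset.sum_sub_distrib, Finset.sum_add_distrib, Finset.sum_const, Finset.card_range]
    rw [Finset.sum_range_succ' (fun d => sv (m+2) l f (d+1) * sv (m+2) l f (d+1)) m]
    rw [Finset.sum_range_succ (fun d => sv (m+2) l f (d+2) * sv (m+2) l f (d+2)) m]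
    simp only [show ∀ d : ℕ, d+1+1 = d+2 from fun d => rfl]
    rw [show (0:ℕ)+1 = 1 from rfl]
    rw [hu1, hun]
    push_cast
    ring
  obtain ⟨w, hw⟩ : (2:ℤ) ∣ ((∑ d ∈ Finset.range (m+1), sv (m+2) l f (d+1) * sv (m+2) l f (d+2))
      - ((m:ℤ)+1)) := by
    refine ⟨1 + (∑ d ∈ Finset.range m, sv (m+2) l f (d+2) * sv (m+2) l f (d+2)) - ((m:ℤ)+1) - c, ?_⟩
    rw [hsum2] at hc
    linarith
  have hgoal : ((3:ℤ) * ((m:ℕ)+2 : ℕ) - 2) - (∑ i : Fin (m+2), (l i : ℤ)) = 4 * (-w) := by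
    rw [hT]
    push_cast at hw ⊢
    linarith
  exact Int.modEq_iff_dvd.mpr ⟨-w, hgoal⟩
end

section
/- Let x_1,...,x_n ∈ {-1,0,1} with x_1 ≠ 0, x_n ≠ 0, and no two consecutive x_i, x_{i+1} both zero. Then n + 2·Σ_{i=1}^{n−1} x_i x_{i+1} ≡ 3n − 2 (mod 4). -/
/-- Key arithmetic step for the caterpillar leaf-count congruence: if
x_1,...,x_n ∈ {-1,0,1}, the first and last are non-zero, and no two consecutive
entries are both zero, then n + 2·Σ x_i x_{i+1} ≡ 3n - 2 (mod 4). -/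
theorem caterpillar_arith_step (n : ℕ) (hn : 1 ≤ n) (x : ℕ → ℤ)
    (hx : ∀ i < n, x i = -1 ∨ x i = 0 ∨ x i = 1)
    (h0 : x 0 ≠ 0) (hlast : x (n - 1) ≠ 0)
    (hcons : ∀ i, i + 1 < n → ¬(x i = 0 ∧ x (i + 1) = 0)) :
    ((n : ℤ) + 2 * ∑ i ∈ Finset.range (n - 1), x i * x (i + 1)) % 4 =
      (3 * (n : ℤ) - 2) % 4 := by
  set S : ℤ := ∑ i ∈ Finset.range (n - 1), x i * x (i + 1) with hS
  -- each term x i * x (i+1) ≡ x i ^ 2 + x (i+1) ^ 2 - 1 (mod 2)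
  have hterm : ∀ i ∈ Finset.range (n - 1),
      (2 : ℤ) ∣ (x i * x (i + 1) - (x i ^ 2 + x (i + 1) ^ 2 - 1)) := by
    intro i hi
    rw [Finset.mem_range] at hi
    have hi1 : i + 1 < n := by omega
    have h1 := hx i (by omega)
    have h2 := hx (i + 1) hi1
    have h3 := hcons i hi1
    rcases h1 with h1 | h1 | h1 <;> rcases h2 with h2 | h2 | h2 <;>
      simp [h1, h2] at h3 ⊢
  have hdvd : (2 : ℤ) ∣ (S - ∑ i ∈ Finset.range (n - 1),
      (x i ^ 2 + x (i + 1) ^ 2 - 1)) := by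
    rw [hS, ← Finset.sum_sub_distrib]
    exact Finset.dvd_sum hterm
  -- compute the auxiliary sum
  have hsq0 : x 0 ^ 2 = 1 := by
    rcases hx 0 (by omega) with h | h | h <;> simp [h] at h0 ⊢
  have hsqn : x (n - 1) ^ 2 = 1 := by
    rcases hx (n - 1) (by omega) with h | h | h <;> simp [h] at hlast ⊢
  have hshift : ∑ i ∈ Finset.range (n - 1), x (i + 1) ^ 2 + x 0 ^ 2
      = ∑ i ∈ Finset.range (n - 1), x i ^ 2 + x (n - 1) ^ 2 := by
    rw [← Finset.sum_range_succ' (fun i => x i ^ 2) (n - 1),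
      ← Finset.sum_range_succ (fun i => x i ^ 2) (n - 1)]
  have hsum : ∑ i ∈ Finset.range (n - 1), (x i ^ 2 + x (i + 1) ^ 2 - 1)
      = 2 * (∑ i ∈ Finset.range (n - 1), x i ^ 2) - ((n : ℤ) - 1) := by
    rw [Finset.sum_sub_distrib, Finset.sum_add_distrib]
    have hcard : ((n - 1 : ℕ) : ℤ) = (n : ℤ) - 1 := by omega
    simp only [Finset.sum_const, Finset.card_range, nsmul_eq_mul, mul_one]
    rw [hcard]
    have : ∑ i ∈ Finset.range (n - 1), x (i + 1) ^ 2
        = ∑ i ∈ Finset.range (n - 1), x i ^ 2 := by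
      have := hshift
      rw [hsq0, hsqn] at this
      omega
    rw [this]; ring
  rw [hsum] at hdvd
  obtain ⟨k, hk⟩ := hdvd
  omega
end

section
/- Let f be a balanced dominating function on the grid graph Grid_{m×n} with 3 ≤ m ≤ n. If f vanishes on the closed neighborhood of some corner vertex (i.e., on v_{1,1}, v_{1,2}, v_{2,1}, up to symmetry), then f is identically zero. -/
open Finset

/-- The grid graph on an m × n lattice: vertices (i,j), edges between horizontally
or vertically adjacent lattice points. -/
def gridGraph (m n : ℕ) : SimpleGraph (Fin m × Fin n) :=
  SimpleGraph.fromRel (fun p q =>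
    (p.1 = q.1 ∧ (q.2 : ℕ) = (p.2 : ℕ) + 1) ∨
    (p.2 = q.2 ∧ (q.1 : ℕ) = (p.1 : ℕ) + 1))

lemma grid_adj (m n : ℕ) (p q : Fin m × Fin n) :
    (gridGraph m n).Adj p q ↔
      ((p.1 : ℕ) = (q.1 : ℕ) ∧ ((q.2 : ℕ) = (p.2 : ℕ) + 1 ∨ (p.2 : ℕ) = (q.2 : ℕ) + 1)) ∨
      ((p.2 : ℕ) = (q.2 : ℕ) ∧ ((q.1 : ℕ) = (p.1 : ℕ) + 1 ∨ (p.1 : ℕ) = (q.1 : ℕ) + 1)) := by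
  simp only [gridGraph, SimpleGraph.fromRel_adj, ne_eq, Prod.ext_iff, Fin.ext_iff, not_and]
  omega

noncomputable def FZ (m n : ℕ) (f : Fin m × Fin n → ℤ) (i j : ℤ) : ℤ :=
  if h : 0 ≤ i ∧ i < (m : ℤ) ∧ 0 ≤ j ∧ j < (n : ℤ) then
    f (⟨i.toNat, by omega⟩, ⟨j.toNat, by omega⟩) else 0

lemma FZ_pos (m n : ℕ) (f : Fin m × Fin n → ℤ) (i j : ℤ)
    (h : 0 ≤ i ∧ i < (m : ℤ) ∧ 0 ≤ j ∧ j < (n : ℤ)) :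
    FZ m n f i j = f (⟨i.toNat, by omega⟩, ⟨j.toNat, by omega⟩) := dif_pos h

lemma FZ_neg (m n : ℕ) (f : Fin m × Fin n → ℤ) (i j : ℤ)
    (h : ¬ (0 ≤ i ∧ i < (m : ℤ) ∧ 0 ≤ j ∧ j < (n : ℤ))) :
    FZ m n f i j = 0 := dif_neg h

lemma FZ_val (m n : ℕ) (f : Fin m × Fin n → ℤ) (p : Fin m) (q : Fin n) :
    FZ m n f ((p : ℕ) : ℤ) ((q : ℕ) : ℤ) = f (p, q) := by
  have hp := p.isLt
  have hq := q.isLt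
  rw [FZ_pos m n f _ _ (by constructor <;> omega)]
  have h1 : (⟨((p : ℕ) : ℤ).toNat, by omega⟩ : Fin m) = p := Fin.ext (by simp)
  have h2 : (⟨((q : ℕ) : ℤ).toNat, by omega⟩ : Fin n) = q := Fin.ext (by simp)
  rw [h1, h2]

open scoped Classical

lemma sum_ind (m n : ℕ) (f : Fin m × Fin n → ℤ) (a b : ℤ) :
    (∑ u : Fin m × Fin n, if ((u.1 : ℕ) : ℤ) = a ∧ ((u.2 : ℕ) : ℤ) = b then f u else 0)
      = FZ m n f a b := by
  by_cases hab : 0 ≤ a ∧ a < (m : ℤ) ∧ 0 ≤ b ∧ b < (n : ℤ)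
  · rw [FZ_pos m n f a b hab]
    set w : Fin m × Fin n := (⟨a.toNat, by omega⟩, ⟨b.toNat, by omega⟩) with hw
    have key : ∀ u : Fin m × Fin n,
        (if ((u.1 : ℕ) : ℤ) = a ∧ ((u.2 : ℕ) : ℤ) = b then f u else 0)
          = (if u = w then f u else 0) := by
      intro u
      by_cases h : ((u.1 : ℕ) : ℤ) = a ∧ ((u.2 : ℕ) : ℤ) = b
      · rw [if_pos h, if_pos]
        exact Prod.ext (Fin.ext (by simp [hw]; omega)) (Fin.ext (by simp [hw]; omega))
      · rw [if_neg h, if_neg]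
        intro he
        apply h
        rw [he]
        constructor <;> (simp [hw]; omega)
    rw [Finset.sum_congr rfl (fun u _ => key u), Finset.sum_ite_eq' Finset.univ w f,
      if_pos (Finset.mem_univ w)]
  · rw [FZ_neg m n f a b hab]
    apply Finset.sum_eq_zero
    intro u _
    rw [if_neg]
    intro h
    have h1 := u.1.isLt
    have h2 := u.2.isLt
    omega

lemma closedSum_grid (m n : ℕ) (f : Fin m × Fin n → ℤ) (v : Fin m × Fin n) :
    closedSum (gridGraph m n) f v =
      FZ m n f ((v.1 : ℕ) : ℤ) ((v.2 : ℕ) : ℤ)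
        + (FZ m n f (((v.1 : ℕ) : ℤ) - 1) ((v.2 : ℕ) : ℤ)
        + FZ m n f (((v.1 : ℕ) : ℤ) + 1) ((v.2 : ℕ) : ℤ)
        + FZ m n f ((v.1 : ℕ) : ℤ) (((v.2 : ℕ) : ℤ) - 1)
        + FZ m n f ((v.1 : ℕ) : ℤ) (((v.2 : ℕ) : ℤ) + 1)) := by
  unfold closedSum
  rw [FZ_val]
  congr 1
  rw [Finset.sum_filter]
  have split : ∀ u : Fin m × Fin n,
      (if (gridGraph m n).Adj v u then f u else 0) =
        (if ((u.1 : ℕ) : ℤ) = ((v.1 : ℕ) : ℤ) - 1 ∧ ((u.2 : ℕ) : ℤ) = ((v.2 : ℕ) : ℤ) then f u else 0)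
      + (if ((u.1 : ℕ) : ℤ) = ((v.1 : ℕ) : ℤ) + 1 ∧ ((u.2 : ℕ) : ℤ) = ((v.2 : ℕ) : ℤ) then f u else 0)
      + (if ((u.1 : ℕ) : ℤ) = ((v.1 : ℕ) : ℤ) ∧ ((u.2 : ℕ) : ℤ) = ((v.2 : ℕ) : ℤ) - 1 then f u else 0)
      + (if ((u.1 : ℕ) : ℤ) = ((v.1 : ℕ) : ℤ) ∧ ((u.2 : ℕ) : ℤ) = ((v.2 : ℕ) : ℤ) + 1 then f u else 0) := by
    intro u
    by_cases hA : (gridGraph m n).Adj v u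
    · rw [if_pos hA]
      rw [grid_adj] at hA
      split_ifs <;> first | ring1 | (exfalso; omega)
    · rw [if_neg hA]
      rw [grid_adj] at hA
      split_ifs <;> first | ring1 | (exfalso; omega)
  rw [Finset.sum_congr rfl (fun u _ => split u)]
  simp only [Finset.sum_add_distrib]
  rw [sum_ind, sum_ind, sum_ind, sum_ind]

lemma FZ_bdd (m n : ℕ) (f : Fin m × Fin n → ℤ) (hf : IsBDF (gridGraph m n) f) (i j : ℤ) :
    -1 ≤ FZ m n f i j ∧ FZ m n f i j ≤ 1 := by
  unfold FZ
  split
  · rcases hf.1 _ with h | h | h <;> rw [h] <;> omega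
  · omega

lemma FZ_eq (m n : ℕ) (f : Fin m × Fin n → ℤ) (hf : IsBDF (gridGraph m n) f) (i j : ℤ)
    (hi : 0 ≤ i) (hi' : i < (m : ℤ)) (hj : 0 ≤ j) (hj' : j < (n : ℤ)) :
    FZ m n f i j + (FZ m n f (i - 1) j + FZ m n f (i + 1) j
      + FZ m n f i (j - 1) + FZ m n f i (j + 1)) = 0 := by
  have h := hf.2 (⟨i.toNat, by omega⟩, ⟨j.toNat, by omega⟩)
  rw [closedSum_grid] at h
  simp only [Fin.val_mk, Int.toNat_of_nonneg hi, Int.toNat_of_nonneg hj] at h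
  exact h

lemma core (m n : ℕ) (hm : 3 ≤ m) (hn : 2 ≤ n) (f : Fin m × Fin n → ℤ)
    (hf : IsBDF (gridGraph m n) f)
    (h00 : FZ m n f 0 0 = 0) (h01 : FZ m n f 0 1 = 0) : ∀ v, f v = 0 := by
  have hb := FZ_bdd m n f hf
  have he := FZ_eq m n f hf
  have hmz : (3 : ℤ) ≤ (m : ℤ) := by exact_mod_cast hm
  have hnz : (2 : ℤ) ≤ (n : ℤ) := by exact_mod_cast hn
  have row0 : ∀ k : ℕ, FZ m n f 0 (k : ℤ) = 0 := by
    intro k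
    induction k using Nat.strong_induction_on with
    | _ k IH =>
      rcases k with _ | _ | j
      · simpa using h00
      · simpa using h01
      · by_cases hk : ((j : ℤ) + 2) < (n : ℤ)
        · push_cast
          rw [show (j : ℤ) + 1 + 1 = (j : ℤ) + 2 by ring]
          have g0 : ∀ t : ℤ, t < (j : ℤ) + 2 → FZ m n f 0 t = 0 := by
            intro t ht
            rcases lt_or_ge t 0 with h | h
            · exact FZ_neg _ _ _ _ _ (by omega)
            · have h2 := IH t.toNat (by omega)
              rwa [show ((t.toNat : ℕ) : ℤ) = t by omega] at h2
          have R1z : ∀ t : ℤ, t ≤ (j : ℤ) → FZ m n f 1 t = 0 := by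
            intro t ht2
            rcases lt_or_ge t 0 with h | h
            · exact FZ_neg _ _ _ _ _ (by omega)
            · have e := he 0 t (by omega) (by omega) h (by omega)
              rw [show (0 : ℤ) - 1 = -1 by ring, show (0 : ℤ) + 1 = 1 by ring] at e
              have z1 := FZ_neg m n f (-1) t (by omega)
              have z2 := g0 t (by omega)
              have z3 := g0 (t - 1) (by omega)
              have z4 := g0 (t + 1) (by omega)
              linarith
          have R1a : FZ m n f 1 ((j : ℤ) + 1) = -(FZ m n f 0 ((j : ℤ) + 2)) := by
            have e := he 0 ((j : ℤ) + 1) (by omega) (by omega) (by omega) (by omega)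
            rw [show (0 : ℤ) - 1 = -1 by ring, show (0 : ℤ) + 1 = 1 by ring,
              show (j : ℤ) + 1 - 1 = (j : ℤ) by ring,
              show (j : ℤ) + 1 + 1 = (j : ℤ) + 2 by ring] at e
            have z1 := FZ_neg m n f (-1) ((j : ℤ) + 1) (by omega)
            have z2 := g0 ((j : ℤ) + 1) (by omega)
            have z3 := g0 (j : ℤ) (by omega)
            linarith
          have R1b : FZ m n f 1 ((j : ℤ) + 2) = -(FZ m n f 0 ((j : ℤ) + 2) + FZ m n f 0 ((j : ℤ) + 3)) := by
            have e := he 0 ((j : ℤ) + 2) (by omega) (by omega) (by omega) (by omega)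
            rw [show (0 : ℤ) - 1 = -1 by ring, show (0 : ℤ) + 1 = 1 by ring,
              show (j : ℤ) + 2 - 1 = (j : ℤ) + 1 by ring,
              show (j : ℤ) + 2 + 1 = (j : ℤ) + 3 by ring] at e
            have z1 := FZ_neg m n f (-1) ((j : ℤ) + 2) (by omega)
            have z2 := g0 ((j : ℤ) + 1) (by omega)
            linarith
          have R2z : FZ m n f 2 ((j : ℤ) - 1) = 0 := by
            rcases lt_or_ge ((j : ℤ) - 1) 0 with h | h
            · exact FZ_neg _ _ _ _ _ (by omega)
            · have e := he 1 ((j : ℤ) - 1) (by omega) (by omega) h (by omega)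
              rw [show (1 : ℤ) - 1 = 0 by ring, show (1 : ℤ) + 1 = 2 by ring,
                show (j : ℤ) - 1 - 1 = (j : ℤ) - 2 by ring,
                show (j : ℤ) - 1 + 1 = (j : ℤ) by ring] at e
              have z1 := R1z ((j : ℤ) - 1) (by omega)
              have z2 := g0 ((j : ℤ) - 1) (by omega)
              have z3 := R1z ((j : ℤ) - 2) (by omega)
              have z4 := R1z (j : ℤ) (by omega)
              linarith
          have R2a : FZ m n f 2 (j : ℤ) = FZ m n f 0 ((j : ℤ) + 2) := by
            have e := he 1 (j : ℤ) (by omega) (by omega) (by omega) (by omega)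
            rw [show (1 : ℤ) - 1 = 0 by ring, show (1 : ℤ) + 1 = 2 by ring] at e
            have z1 := R1z (j : ℤ) (by omega)
            have z2 := g0 (j : ℤ) (by omega)
            have z3 := R1z ((j : ℤ) - 1) (by omega)
            linarith
          have R2b : FZ m n f 2 ((j : ℤ) + 1) = 2 * FZ m n f 0 ((j : ℤ) + 2) + FZ m n f 0 ((j : ℤ) + 3) := by
            have e := he 1 ((j : ℤ) + 1) (by omega) (by omega) (by omega) (by omega)
            rw [show (1 : ℤ) - 1 = 0 by ring, show (1 : ℤ) + 1 = 2 by ring,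
              show (j : ℤ) + 1 - 1 = (j : ℤ) by ring,
              show (j : ℤ) + 1 + 1 = (j : ℤ) + 2 by ring] at e
            have z1 := R1a
            have z2 := g0 ((j : ℤ) + 1) (by omega)
            have z3 := R1z (j : ℤ) (by omega)
            linarith
          have R3 : FZ m n f 3 (j : ℤ) = -(3 * FZ m n f 0 ((j : ℤ) + 2) + FZ m n f 0 ((j : ℤ) + 3)) := by
            have e := he 2 (j : ℤ) (by omega) (by omega) (by omega) (by omega)
            rw [show (2 : ℤ) - 1 = 1 by ring, show (2 : ℤ) + 1 = 3 by ring] at e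
            have z1 := R1z (j : ℤ) (by omega)
            linarith
          obtain ⟨bb1, bb2⟩ := hb 0 ((j : ℤ) + 3)
          obtain ⟨bc1, bc2⟩ := hb 3 (j : ℤ)
          obtain ⟨ba1, ba2⟩ := hb 0 ((j : ℤ) + 2)
          rw [R3] at bc1 bc2
          omega
        · exact FZ_neg _ _ _ _ _ (by push_cast; omega)
  have rows : ∀ i : ℕ, ∀ t : ℤ, FZ m n f (i : ℤ) t = 0 := by
    intro i
    induction i using Nat.strong_induction_on with
    | _ i IH =>
      rcases i with _ | _ | i
      · intro t
        rcases lt_or_ge t 0 with h | h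
        · exact FZ_neg _ _ _ _ _ (by push_cast; omega)
        · have h2 := row0 t.toNat
          rw [show ((t.toNat : ℕ) : ℤ) = t by omega] at h2
          simpa using h2
      · intro t
        push_cast
        rcases lt_or_ge t 0 with h | h
        · exact FZ_neg _ _ _ _ _ (by omega)
        rcases lt_or_ge t (n : ℤ) with h2 | h2
        · have e := he 0 t (by omega) (by omega) h h2
          rw [show (0 : ℤ) - 1 = -1 by ring, show (0 : ℤ) + 1 = 1 by ring] at e
          have z1 := FZ_neg m n f (-1) t (by omega)
          have r0 := IH 0 (by omega)
          push_cast at r0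
          linarith [r0 t, r0 (t - 1), r0 (t + 1)]
        · exact FZ_neg _ _ _ _ _ (by omega)
      · intro t
        push_cast
        rcases lt_or_ge t 0 with h | h
        · exact FZ_neg _ _ _ _ _ (by omega)
        rcases lt_or_ge t (n : ℤ) with h2 | h2
        swap
        · exact FZ_neg _ _ _ _ _ (by omega)
        rcases lt_or_ge ((i : ℤ) + 2) (m : ℤ) with h3 | h3
        swap
        · exact FZ_neg _ _ _ _ _ (by omega)
        · rw [show (i : ℤ) + 1 + 1 = (i : ℤ) + 2 by ring]
          have e := he ((i : ℤ) + 1) t (by omega) (by omega) h h2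
          rw [show (i : ℤ) + 1 - 1 = (i : ℤ) by ring,
            show (i : ℤ) + 1 + 1 = (i : ℤ) + 2 by ring] at e
          have r1 := IH (i + 1) (by omega)
          push_cast at r1
          have r0 := IH i (by omega)
          linarith [r1 t, r1 (t - 1), r1 (t + 1), r0 t]
  intro v
  obtain ⟨p, q⟩ := v
  have h2 := rows (p : ℕ) ((q : ℕ) : ℤ)
  rwa [FZ_val] at h2

lemma isBDF_comp {V : Type*} [Fintype V] (G : SimpleGraph V) (f : V → ℤ) (e : Equiv.Perm V)
    (he : ∀ a b, G.Adj (e a) (e b) ↔ G.Adj a b) (hf : IsBDF G f) :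
    IsBDF G (fun v => f (e v)) := by
  constructor
  · intro v; exact hf.1 (e v)
  · intro v
    have hs : closedSum G (fun v => f (e v)) v = closedSum G f (e v) := by
      unfold closedSum
      congr 1
      apply Finset.sum_equiv e
      · intro u
        simp only [Finset.mem_filter, Finset.mem_univ, true_and]
        exact (he v u).symm
      · intro u _
        rfl
    rw [hs]
    exact hf.2 (e v)

def colFlip (m n : ℕ) : Equiv.Perm (Fin m × Fin n) :=
  ⟨fun p => (p.1, p.2.rev), fun p => (p.1, p.2.rev),
    fun p => by simp, fun p => by simp⟩

def rowFlip (m n : ℕ) : Equiv.Perm (Fin m × Fin n) :=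
  ⟨fun p => (p.1.rev, p.2), fun p => (p.1.rev, p.2),
    fun p => by simp, fun p => by simp⟩

lemma colFlip_adj (m n : ℕ) (p q : Fin m × Fin n) :
    (gridGraph m n).Adj (colFlip m n p) (colFlip m n q) ↔ (gridGraph m n).Adj p q := by
  have h1 := p.2.isLt
  have h2 := q.2.isLt
  simp only [grid_adj, colFlip, Equiv.coe_fn_mk, Fin.val_rev]
  omega

lemma rowFlip_adj (m n : ℕ) (p q : Fin m × Fin n) :
    (gridGraph m n).Adj (rowFlip m n p) (rowFlip m n q) ↔ (gridGraph m n).Adj p q := by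
  have h1 := p.1.isLt
  have h2 := q.1.isLt
  simp only [grid_adj, rowFlip, Equiv.coe_fn_mk, Fin.val_rev]
  omega

lemma FZ_nat (m n : ℕ) (f : Fin m × Fin n → ℤ) (i j : ℕ) (hi : i < m) (hj : j < n) :
    FZ m n f (i : ℤ) (j : ℤ) = f (⟨i, hi⟩, ⟨j, hj⟩) := by
  have h := FZ_val m n f ⟨i, hi⟩ ⟨j, hj⟩
  simpa using h

/-- If a BDF on Grid_{m×n} (3 ≤ m ≤ n) vanishes on the closed neighborhood of some
corner vertex, then it is identically zero. -/
theorem grid_bdf_corner_zero (m n : ℕ) (hm : 3 ≤ m) (hmn : m ≤ n)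
    (f : Fin m × Fin n → ℤ) (hf : IsBDF (gridGraph m n) f)
    (hcorner : ∃ v : Fin m × Fin n,
      (v = (⟨0, by omega⟩, ⟨0, by omega⟩) ∨ v = (⟨0, by omega⟩, ⟨n - 1, by omega⟩) ∨
       v = (⟨m - 1, by omega⟩, ⟨0, by omega⟩) ∨ v = (⟨m - 1, by omega⟩, ⟨n - 1, by omega⟩)) ∧
      f v = 0 ∧ ∀ u, (gridGraph m n).Adj v u → f u = 0) :
    ∀ v, f v = 0 := by
  have hn : 2 ≤ n := by omega
  obtain ⟨v, hv, hv0, hnb⟩ := hcorner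
  rcases hv with hv | hv | hv | hv
  · -- corner (0,0)
    subst hv
    apply core m n hm hn f hf
    · have h := FZ_nat m n f 0 0 (by omega) (by omega)
      simp only [Nat.cast_zero] at h
      rw [h]
      exact hv0
    · have h := FZ_nat m n f 0 1 (by omega) (by omega)
      simp only [Nat.cast_zero, Nat.cast_one] at h
      rw [h]
      apply hnb
      rw [grid_adj]
      exact Or.inl ⟨rfl, Or.inl (show (1 : ℕ) = 0 + 1 by omega)⟩
  · -- corner (0, n-1)
    subst hv
    set e := colFlip m n with hedef
    have hg : IsBDF (gridGraph m n) (fun p => f (e p)) :=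
      isBDF_comp (gridGraph m n) f e (colFlip_adj m n) hf
    have hall := core m n hm hn (fun p => f (e p)) hg ?_ ?_
    · intro w
      have h := hall (e w)
      simp only [hedef, colFlip, Equiv.coe_fn_mk, Fin.rev_rev] at h
      exact h
    · have h := FZ_nat m n (fun p => f (e p)) 0 0 (by omega) (by omega)
      simp only [Nat.cast_zero] at h
      rw [h]
      show f (e (⟨0, by omega⟩, ⟨0, by omega⟩)) = 0
      have hrev : Fin.rev (⟨0, by omega⟩ : Fin n) = ⟨n - 1, by omega⟩ := by
        apply Fin.ext
        simp [Fin.val_rev]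
      simp only [hedef, colFlip, Equiv.coe_fn_mk, hrev]
      exact hv0
    · have h := FZ_nat m n (fun p => f (e p)) 0 1 (by omega) (by omega)
      simp only [Nat.cast_zero, Nat.cast_one] at h
      rw [h]
      show f (e (⟨0, by omega⟩, ⟨1, by omega⟩)) = 0
      have hrev : Fin.rev (⟨1, by omega⟩ : Fin n) = ⟨n - 2, by omega⟩ := by
        apply Fin.ext
        simp [Fin.val_rev]
      simp only [hedef, colFlip, Equiv.coe_fn_mk, hrev]
      apply hnb
      rw [grid_adj]
      exact Or.inl ⟨rfl, Or.inr (show n - 1 = n - 2 + 1 by omega)⟩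
  · -- corner (m-1, 0)
    subst hv
    set e := rowFlip m n with hedef
    have hg : IsBDF (gridGraph m n) (fun p => f (e p)) :=
      isBDF_comp (gridGraph m n) f e (rowFlip_adj m n) hf
    have hall := core m n hm hn (fun p => f (e p)) hg ?_ ?_
    · intro w
      have h := hall (e w)
      simp only [hedef, rowFlip, Equiv.coe_fn_mk, Fin.rev_rev] at h
      exact h
    · have h := FZ_nat m n (fun p => f (e p)) 0 0 (by omega) (by omega)
      simp only [Nat.cast_zero] at h
      rw [h]
      show f (e (⟨0, by omega⟩, ⟨0, by omega⟩)) = 0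
      have hrev : Fin.rev (⟨0, by omega⟩ : Fin m) = ⟨m - 1, by omega⟩ := by
        apply Fin.ext
        simp [Fin.val_rev]
      simp only [hedef, rowFlip, Equiv.coe_fn_mk, hrev]
      exact hv0
    · have h := FZ_nat m n (fun p => f (e p)) 0 1 (by omega) (by omega)
      simp only [Nat.cast_zero, Nat.cast_one] at h
      rw [h]
      show f (e (⟨0, by omega⟩, ⟨1, by omega⟩)) = 0
      have hrev : Fin.rev (⟨0, by omega⟩ : Fin m) = ⟨m - 1, by omega⟩ := by
        apply Fin.ext
        simp [Fin.val_rev]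
      simp only [hedef, rowFlip, Equiv.coe_fn_mk, hrev]
      apply hnb
      rw [grid_adj]
      exact Or.inl ⟨rfl, Or.inl (show (1 : ℕ) = 0 + 1 by omega)⟩
  · -- corner (m-1, n-1)
    subst hv
    set e := (colFlip m n).trans (rowFlip m n) with hedef
    have hadj : ∀ a b, (gridGraph m n).Adj (e a) (e b) ↔ (gridGraph m n).Adj a b := by
      intro a b
      rw [hedef]
      simp only [Equiv.trans_apply]
      rw [rowFlip_adj, colFlip_adj]
    have hg : IsBDF (gridGraph m n) (fun p => f (e p)) :=
      isBDF_comp (gridGraph m n) f e hadj hf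
    have hall := core m n hm hn (fun p => f (e p)) hg ?_ ?_
    · intro w
      have h := hall (e w)
      simp only [hedef, Equiv.trans_apply, colFlip, rowFlip, Equiv.coe_fn_mk,
        Fin.rev_rev] at h
      exact h
    · have h := FZ_nat m n (fun p => f (e p)) 0 0 (by omega) (by omega)
      simp only [Nat.cast_zero] at h
      rw [h]
      show f (e (⟨0, by omega⟩, ⟨0, by omega⟩)) = 0
      have hrev1 : Fin.rev (⟨0, by omega⟩ : Fin m) = ⟨m - 1, by omega⟩ := by
        apply Fin.ext
        simp [Fin.val_rev]
      have hrev2 : Fin.rev (⟨0, by omega⟩ : Fin n) = ⟨n - 1, by omega⟩ := by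
        apply Fin.ext
        simp [Fin.val_rev]
      simp only [hedef, Equiv.trans_apply, colFlip, rowFlip, Equiv.coe_fn_mk, hrev1, hrev2]
      exact hv0
    · have h := FZ_nat m n (fun p => f (e p)) 0 1 (by omega) (by omega)
      simp only [Nat.cast_zero, Nat.cast_one] at h
      rw [h]
      show f (e (⟨0, by omega⟩, ⟨1, by omega⟩)) = 0
      have hrev1 : Fin.rev (⟨0, by omega⟩ : Fin m) = ⟨m - 1, by omega⟩ := by
        apply Fin.ext
        simp [Fin.val_rev]
      have hrev2 : Fin.rev (⟨1, by omega⟩ : Fin n) = ⟨n - 2, by omega⟩ := by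
        apply Fin.ext
        simp [Fin.val_rev]
      simp only [hedef, Equiv.trans_apply, colFlip, rowFlip, Equiv.coe_fn_mk, hrev1, hrev2]
      apply hnb
      rw [grid_adj]
      exact Or.inl ⟨rfl, Or.inr (show n - 1 = n - 2 + 1 by omega)⟩
end

section
/- The labeling of the path graph P_n given by repeating the pattern 1, −1, 0 (i.e., x_j = 1 if j ≡ 1 mod 3, x_j = −1 if j ≡ 2 mod 3, x_j = 0 if j ≡ 0 mod 3) is a non-zero balanced dominating function on P_n if and only if n ≡ 2 (mod 3), and its weight is 0. -/
open Finset

/-- The path graph P_n on vertices v_1, ..., v_n. -/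
def pathGraph' (n : ℕ) : SimpleGraph (Fin n) :=
  SimpleGraph.fromRel (fun p q => (q : ℕ) = (p : ℕ) + 1)

/-- The periodic labeling 1, -1, 0, 1, -1, 0, ... of the path P_n (so the j-th
vertex, 1-indexed, gets 1 if j ≡ 1 (mod 3), -1 if j ≡ 2 (mod 3), 0 if j ≡ 0 (mod 3)). -/
def pathPattern (n : ℕ) : Fin n → ℤ :=
  fun j => if (j : ℕ) % 3 = 0 then 1 else if (j : ℕ) % 3 = 1 then -1 else 0

lemma sum_filter_val {n : ℕ} (f : Fin n → ℤ) (k : ℕ) :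
    ∑ u ∈ Finset.univ.filter (fun u : Fin n => (u : ℕ) = k), f u =
      if h : k < n then f ⟨k, h⟩ else 0 := by
  split_ifs with h
  · rw [show Finset.univ.filter (fun u : Fin n => (u : ℕ) = k) = {⟨k, h⟩} from ?_]
    · simp
    · ext u; simp [Fin.ext_iff]
  · rw [Finset.filter_false_of_mem, Finset.sum_empty]
    intro u _ hu
    exact h (hu ▸ u.isLt)

lemma closedSum_path {n : ℕ} (f : Fin n → ℤ) (v : Fin n) :
    closedSum (pathGraph' n) f v =
      f v + (if h : (v : ℕ) + 1 < n then f ⟨(v : ℕ) + 1, h⟩ else 0) +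
        (if _ : 0 < (v : ℕ) then f ⟨(v : ℕ) - 1, lt_of_le_of_lt (Nat.pred_le _) v.isLt⟩
          else 0) := by
  classical
  unfold closedSum pathGraph'
  have hfilter :
      Finset.univ.filter
          (fun u : Fin n =>
            (SimpleGraph.fromRel (fun p q : Fin n => (q : ℕ) = (p : ℕ) + 1)).Adj v u) =
        Finset.univ.filter (fun u : Fin n => (u : ℕ) = (v : ℕ) + 1) ∪
          Finset.univ.filter (fun u : Fin n => (v : ℕ) = (u : ℕ) + 1) := by
    ext u
    simp only [Finset.mem_filter, Finset.mem_union, Finset.mem_univ, true_and,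
      SimpleGraph.fromRel_adj, ne_eq, Fin.ext_iff]
    omega
  rw [Finset.filter_congr_decidable, hfilter, Finset.sum_union (by
    rw [Finset.disjoint_left]
    intro u hu1 hu2
    simp only [Finset.mem_filter] at hu1 hu2
    omega)]
  rw [add_assoc]
  congr 1
  congr 1
  · exact sum_filter_val f _
  · by_cases hv : 0 < (v : ℕ)
    · rw [show Finset.univ.filter (fun u : Fin n => (v : ℕ) = (u : ℕ) + 1) =
          Finset.univ.filter (fun u : Fin n => (u : ℕ) = (v : ℕ) - 1) from by
            ext u; simp only [Finset.mem_filter, Finset.mem_univ, true_and]; omega,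
        sum_filter_val, dif_pos hv, dif_pos (Nat.lt_of_le_of_lt (Nat.sub_le _ _) v.isLt)]
    · rw [dif_neg hv, Finset.filter_false_of_mem, Finset.sum_empty]
      intro u _
      omega

def gpat (j : ℕ) : ℤ := if j % 3 = 0 then 1 else if j % 3 = 1 then -1 else 0

lemma sum_gpat (n : ℕ) : ∑ j ∈ Finset.range n, gpat j = if n % 3 = 1 then 1 else 0 := by
  induction n with
  | zero => simp
  | succ m ih =>
    rw [Finset.sum_range_succ, ih]
    unfold gpat
    split_ifs <;> omega

/-- The pattern 1, -1, 0 repeated is a non-zero balanced dominating function on P_n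
iff n ≡ 2 (mod 3); in that case its weight is 0. -/
theorem pathPattern_bdf_iff (n : ℕ) :
    ((IsBDF (pathGraph' n) (pathPattern n) ∧ pathPattern n ≠ fun _ => 0) ↔ n % 3 = 2) ∧
      (n % 3 = 2 → ∑ j, pathPattern n j = 0) := by
  constructor
  · constructor
    · rintro ⟨⟨_, hbal⟩, hne⟩
      have hn : 0 < n := by
        by_contra h
        push_neg at h
        interval_cases n
        exact hne (funext fun j => j.elim0)
      have hlast := hbal ⟨n - 1, by omega⟩
      rw [closedSum_path] at hlast
      simp only [pathPattern, Fin.val_mk] at hlast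
      split_ifs at hlast <;> omega
    · intro h
      refine ⟨⟨?_, ?_⟩, ?_⟩
      · intro v
        unfold pathPattern
        split_ifs <;> simp
      · intro v
        have hv := v.isLt
        rw [closedSum_path]
        simp only [pathPattern, Fin.val_mk]
        split_ifs <;> omega
      · intro heq
        have h0 : (0 : ℕ) < n := by omega
        have := congrFun heq ⟨0, h0⟩
        simp [pathPattern] at this
  · intro h
    have : ∑ j, pathPattern n j = ∑ j ∈ Finset.range n, gpat j := by
      rw [← Fin.sum_univ_eq_sum_range]
      rfl
    rw [this, sum_gpat, if_neg (by omega)]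
end

section
/- Every balanced dominating function on a grid graph Grid_{m×n} with 3 ≤ m ≤ n has weight 0; hence every such grid graph is d-balanced (γ_bd(Grid_{m×n}) = 0). -/
open Finset

open Finset Polynomial
open scoped Classical

namespace GridBD

/-- Sum of all r-th roots of unity in ℂ. -/
lemma sum_nthRootsFinset {r : ℕ} (hr : 0 < r) :
    ∑ ξ ∈ nthRootsFinset r (1:ℂ), ξ = if r = 1 then (1:ℂ) else 0 := by
  have hζ : IsPrimitiveRoot (Complex.exp (2 * Real.pi * Complex.I / r)) r :=
    Complex.isPrimitiveRoot_exp r hr.ne'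
  set ζ := Complex.exp (2 * Real.pi * Complex.I / r) with hζdef
  have hinj : Set.InjOn (ζ ^ ·) (Finset.range r) := by
    intro i hi j hj hij
    exact hζ.pow_inj (Finset.mem_range.1 hi) (Finset.mem_range.1 hj) hij
  have himg : nthRootsFinset r (1:ℂ) = (Finset.range r).image (ζ ^ ·) := by
    refine (Finset.eq_of_subset_of_card_le ?_ ?_).symm
    · intro x hx
      simp only [Finset.mem_image, Finset.mem_range] at hx
      obtain ⟨k, _, rfl⟩ := hx
      exact (Polynomial.mem_nthRootsFinset hr (1:ℂ)).2
        (by rw [← pow_mul, mul_comm, pow_mul, hζ.pow_eq_one, one_pow])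
    · rw [hζ.card_nthRootsFinset, Finset.card_image_of_injOn hinj, Finset.card_range]
  rw [himg, Finset.sum_image hinj]
  rcases eq_or_ne r 1 with h1 | h1
  · subst h1; simp
  · rw [if_neg h1]
    have hζ1 : ζ ≠ 1 := by
      have := hζ.pow_ne_one_of_pos_of_lt (l := 1) one_ne_zero (lt_of_le_of_ne hr (Ne.symm h1))
      simpa using this
    rw [geom_sum_eq hζ1, hζ.pow_eq_one, sub_self, zero_div]

/-- Sum of primitive r-th roots of unity equals the Möbius function. -/
lemma sum_primitiveRoots {r : ℕ} (hr : 0 < r) :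
    ∑ ξ ∈ primitiveRoots r ℂ, ξ = (ArithmeticFunction.moebius r : ℤ) := by
  induction r using Nat.strong_induction_on with
  | _ r ih =>
  have hζ : IsPrimitiveRoot (Complex.exp (2 * Real.pi * Complex.I / r)) r :=
    Complex.isPrimitiveRoot_exp r hr.ne'
  have hN : NeZero r := ⟨hr.ne'⟩
  have hbi := IsPrimitiveRoot.nthRoots_one_eq_biUnion_primitiveRoots (R := ℂ) (n := r)
  -- sum over nthRootsFinset = sum over divisors of sums over primitiveRoots
  have hdisj : ∀ d₁ ∈ r.divisors, ∀ d₂ ∈ r.divisors, d₁ ≠ d₂ →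
      Disjoint (primitiveRoots d₁ ℂ) (primitiveRoots d₂ ℂ) := by
    intro d₁ _ d₂ _ h
    exact IsPrimitiveRoot.disjoint h
  have hsum : ∑ ξ ∈ nthRootsFinset r (1:ℂ), ξ = ∑ d ∈ r.divisors, ∑ ξ ∈ primitiveRoots d ℂ, ξ := by
    rw [hbi, Finset.sum_biUnion]
    intro d₁ h₁ d₂ h₂ h
    exact IsPrimitiveRoot.disjoint h
  -- moebius divisor sum
  have hmoeb : ∑ d ∈ r.divisors, (ArithmeticFunction.moebius d : ℤ) =
      if r = 1 then 1 else 0 := by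
    rw [← ArithmeticFunction.coe_mul_zeta_apply, ArithmeticFunction.moebius_mul_coe_zeta,
      ArithmeticFunction.one_apply]
  -- peel off d = r
  have hrin : r ∈ r.divisors := Nat.mem_divisors_self r hr.ne'
  have key : ∀ d ∈ r.divisors.erase r, (∑ ξ ∈ primitiveRoots d ℂ, ξ)
      = ((ArithmeticFunction.moebius d : ℤ) : ℂ) := by
    intro d hd
    have hdmem := Finset.mem_of_mem_erase hd
    have hdne := Finset.ne_of_mem_erase hd
    have hddvd := (Nat.mem_divisors.1 hdmem).1
    have hdpos : 0 < d := Nat.pos_of_dvd_of_pos hddvd hr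
    have hdlt : d < r := lt_of_le_of_ne (Nat.le_of_dvd hr hddvd) hdne
    exact ih d hdlt hdpos
  have expand : ∑ d ∈ r.divisors, ∑ ξ ∈ primitiveRoots d ℂ, ξ
      = (∑ ξ ∈ primitiveRoots r ℂ, ξ) + ∑ d ∈ r.divisors.erase r, ((ArithmeticFunction.moebius d : ℤ) : ℂ) := by
    rw [← Finset.add_sum_erase _ _ hrin]
    congr 1
    exact Finset.sum_congr rfl key
  have h2 : ∑ d ∈ r.divisors, ((ArithmeticFunction.moebius d : ℤ) : ℂ) = if r = 1 then (1:ℂ) else 0 := by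
    have : (((∑ d ∈ r.divisors, ArithmeticFunction.moebius d : ℤ)) : ℂ) = if r = 1 then (1:ℂ) else 0 := by
      rw [hmoeb]; split <;> simp
    rw [← this]; push_cast; ring
  have h3 : ((ArithmeticFunction.moebius r : ℤ) : ℂ)
      + ∑ d ∈ r.divisors.erase r, ((ArithmeticFunction.moebius d : ℤ) : ℂ) = if r = 1 then (1:ℂ) else 0 := by
    rw [← h2]
    exact Finset.add_sum_erase _ (fun d => ((ArithmeticFunction.moebius d : ℤ) : ℂ)) hrin
  have h4 := sum_nthRootsFinset hr
  rw [hsum, expand] at h4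
  linear_combination h4 - h3

end GridBD

namespace GridBD


/-- fibers of a surjective group hom all have the kernel's cardinality -/
lemma fiber_card_const {G H : Type*} [Group G] [Group H] [Fintype G] [DecidableEq H]
    (π : G →* H) (h : H) (hs : Function.Surjective π) :
    (Finset.univ.filter (fun w => π w = h)).card
      = (Finset.univ.filter (fun w => π w = 1)).card := by
  obtain ⟨w₀, hw₀⟩ := hs h
  apply Finset.card_bij' (fun w _ => w * w₀⁻¹) (fun w _ => w * w₀)
  · intro a ha
    simp only [Finset.mem_filter, Finset.mem_univ, true_and] at ha ⊢
    rw [map_mul, ha, map_inv, hw₀, mul_inv_cancel]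
  · intro a ha
    simp only [Finset.mem_filter, Finset.mem_univ, true_and] at ha ⊢
    rw [map_mul, ha, hw₀, one_mul]
  · intro a _; group
  · intro a _; group

lemma ramanujan_sum {K : ℕ} (hK : 0 < K) {ζ : ℂ} (hζ : IsPrimitiveRoot ζ K) (u : ℕ) :
    ∃ κ : ℕ, 0 < κ ∧ K.totient = κ * (K / Nat.gcd K u).totient ∧
      ∑ t ∈ (Finset.range K).filter K.Coprime, ζ ^ (t * u)
        = (κ : ℂ) * ((ArithmeticFunction.moebius (K / Nat.gcd K u) : ℤ) : ℂ) := by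
  haveI : NeZero K := ⟨hK.ne'⟩
  set d := Nat.gcd K u with hd
  set r := K / d with hrdef
  have hd0 : 0 < d := Nat.gcd_pos_of_pos_left _ hK
  have hddvdK : d ∣ K := Nat.gcd_dvd_left K u
  have hrdvd : r ∣ K := Nat.div_dvd_of_dvd hddvdK
  have hr0 : 0 < r := Nat.div_pos (Nat.le_of_dvd hK hddvdK) hd0
  haveI : NeZero r := ⟨hr0.ne'⟩
  have hKdr : K = d * r := (Nat.mul_div_cancel' hddvdK).symm
  -- η := ζ ^ u is a primitive r-th root of unity
  set η := ζ ^ u with hηdef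
  have hηprim : IsPrimitiveRoot η r := by
    have h1 : IsPrimitiveRoot (ζ ^ d) r := hζ.pow hK hKdr
    have h2 : Nat.Coprime (u / d) r := by
      have := Nat.coprime_div_gcd_div_gcd (m := K) (n := u) hd0
      exact this.symm
    have h3 : (ζ ^ d) ^ (u / d) = η := by
      rw [← pow_mul, Nat.mul_div_cancel' (Nat.gcd_dvd_right K u)]
    rw [← h3]
    exact h1.pow_of_coprime _ h2
  set π := ZMod.unitsMap hrdvd with hπ
  -- convert the sum over coprime residues to a sum over units
  have stepA : ∑ t ∈ (Finset.range K).filter K.Coprime, ζ ^ (t * u)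
      = ∑ w : (ZMod K)ˣ, η ^ ((w : ZMod K).val) := by
    symm
    refine Finset.sum_bij (fun (w : (ZMod K)ˣ) _ => (w : ZMod K).val) ?_ ?_ ?_ ?_
    · intro w _
      exact Finset.mem_filter.2 ⟨Finset.mem_range.2 (ZMod.val_lt _),
        (ZMod.val_coe_unit_coprime w).symm⟩
    · intro w₁ _ w₂ _ heq
      exact Units.ext (ZMod.val_injective K heq)
    · intro t ht
      obtain ⟨htr, htc⟩ := Finset.mem_filter.1 ht
      refine ⟨ZMod.unitOfCoprime t htc.symm, Finset.mem_univ _, ?_⟩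
      show ((ZMod.unitOfCoprime t htc.symm : (ZMod K)ˣ) : ZMod K).val = t
      rw [ZMod.coe_unitOfCoprime, ZMod.val_natCast,
        Nat.mod_eq_of_lt (Finset.mem_range.1 htr)]
    · intro w _
      rw [hηdef, ← pow_mul, mul_comm]
  -- replace exponent by its reduction mod r
  have stepB : ∀ w : (ZMod K)ˣ, η ^ ((w : ZMod K).val) = η ^ (((π w : ZMod r)).val) := by
    intro w
    have hval : (((π w : ZMod r)).val) = ((w : ZMod K).val) % r := by
      have h1 : ((π w : (ZMod r)ˣ) : ZMod r) = ZMod.castHom hrdvd (ZMod r) (w : ZMod K) := rfl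
      rw [h1, ZMod.castHom_apply, ← ZMod.natCast_val, ZMod.val_natCast]
    rw [hval]
    conv_lhs => rw [← Nat.mod_add_div ((w : ZMod K).val) r]
    rw [pow_add, pow_mul, hηprim.pow_eq_one, one_pow, mul_one]
  -- fiberwise summation
  set κ := (Finset.univ.filter (fun w : (ZMod K)ˣ => π w = 1)).card with hκ
  have hsurj : Function.Surjective π := ZMod.unitsMap_surjective hrdvd
  have stepC : ∑ w : (ZMod K)ˣ, η ^ (((π w : ZMod r)).val)
      = κ • ∑ h : (ZMod r)ˣ, η ^ ((h : ZMod r).val) := by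
    rw [Finset.sum_comp (fun h : (ZMod r)ˣ => η ^ ((h : ZMod r).val)) π]
    have himg : Finset.univ.image π = Finset.univ := by
      apply Finset.eq_univ_of_forall
      intro h
      obtain ⟨w, hw⟩ := hsurj h
      exact Finset.mem_image.2 ⟨w, Finset.mem_univ _, hw⟩
    rw [himg, Finset.smul_sum]
    refine Finset.sum_congr rfl fun h _ => ?_
    rw [fiber_card_const π h hsurj]
  have cardeq : K.totient = κ * r.totient := by
    have := Finset.card_eq_sum_card_fiberwise
      (f := π) (s := Finset.univ) (t := Finset.univ) (fun w _ => Finset.mem_univ _)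
    rw [← ZMod.card_units_eq_totient K, ← ZMod.card_units_eq_totient r]
    rw [Fintype.card, this, Fintype.card]
    rw [Finset.card_eq_sum_ones (Finset.univ : Finset (ZMod r)ˣ), Finset.mul_sum]
    refine Finset.sum_congr rfl fun h _ => ?_
    rw [mul_one, fiber_card_const π h hsurj]
  have hκ0 : 0 < κ := by
    rcases Nat.eq_zero_or_pos κ with h0 | h
    · exfalso
      have := cardeq
      rw [h0, zero_mul] at this
      exact (Nat.totient_pos.2 hK).ne' this
    · exact h
  -- sum over units of ZMod r equals sum over primitive roots
  have stepD : ∑ h : (ZMod r)ˣ, η ^ ((h : ZMod r).val)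
      = ((ArithmeticFunction.moebius r : ℤ) : ℂ) := by
    rw [← sum_primitiveRoots hr0]
    refine Finset.sum_bij (fun h _ => η ^ ((h : ZMod r).val)) ?_ ?_ ?_ ?_
    · intro h _
      exact (mem_primitiveRoots hr0).2
        (hηprim.pow_of_coprime _ (ZMod.val_coe_unit_coprime h))
    · intro h₁ _ h₂ _ heq
      have : ((h₁ : ZMod r)).val = ((h₂ : ZMod r)).val :=
        hηprim.pow_inj (ZMod.val_lt _) (ZMod.val_lt _) heq
      exact Units.ext (ZMod.val_injective r this)
    · intro ξ hξ
      have hξprim := isPrimitiveRoot_of_mem_primitiveRoots hξ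
      obtain ⟨i, hik, rfl⟩ := hηprim.eq_pow_of_pow_eq_one hξprim.pow_eq_one
      have hcop : Nat.Coprime i r := (hηprim.pow_iff_coprime hr0 i).1 hξprim
      refine ⟨ZMod.unitOfCoprime i hcop, Finset.mem_univ _, ?_⟩
      show η ^ ((ZMod.unitOfCoprime i hcop : ZMod r)).val = η ^ i
      rw [ZMod.coe_unitOfCoprime, ZMod.val_natCast, Nat.mod_eq_of_lt hik]
    · intro h _; rfl
  refine ⟨κ, hκ0, cardeq, ?_⟩
  rw [stepA, Finset.sum_congr rfl (fun w _ => stepB w), stepC, stepD, nsmul_eq_mul]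

end GridBD

namespace GridBD

lemma moebius_totient_bound {r : ℕ} (he : Even r) (h4 : 4 ≤ r) :
    -(r.totient : ℤ) ≤ 8 * (ArithmeticFunction.moebius r : ℤ) := by
  have htot0 : (0:ℤ) ≤ (r.totient : ℤ) := Int.natCast_nonneg _
  by_cases hsq : Squarefree r
  · have hμ := ArithmeticFunction.moebius_apply_of_squarefree hsq
    rcases Nat.even_or_odd (ArithmeticFunction.cardFactors r) with hev | hod
    · rw [hμ, hev.neg_one_pow]; linarith
    · rw [hμ, hod.neg_one_pow]
      -- need 8 ≤ totient r
      obtain ⟨m, hm⟩ : 2 ∣ r := he.two_dvd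
      have hmodd : Odd m := by
        rcases Nat.even_or_odd m with hme | hmo
        · exfalso
          obtain ⟨k, hk⟩ := hme
          have : 2 * 2 ∣ r := ⟨k, by omega⟩
          exact (Nat.squarefree_iff_prime_squarefree.1 hsq 2 Nat.prime_two) (by
            simpa [sq] using this)
        · exact hmo
      have hm3 : 3 ≤ m := by
        rcases hmodd with ⟨k, hk⟩
        omega
      have hmdvd : m ∣ r := ⟨2, by omega⟩
      have hmsq : Squarefree m := hsq.squarefree_of_dvd hmdvd
      have hcop2m : Nat.Coprime 2 m := Nat.prime_two.coprime_iff_not_dvd.2 (by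
        intro hdvd
        obtain ⟨c, hc⟩ := hdvd
        rcases hmodd with ⟨k, hk⟩
        omega)
      have hμsplit : ArithmeticFunction.moebius r
          = ArithmeticFunction.moebius 2 * ArithmeticFunction.moebius m := by
        rw [hm]
        exact ArithmeticFunction.isMultiplicative_moebius.map_mul_of_coprime hcop2m
      have hμ2 : ArithmeticFunction.moebius 2 = -1 :=
        ArithmeticFunction.moebius_apply_prime Nat.prime_two
      have hμr : ArithmeticFunction.moebius r = -1 := by rw [hμ, hod.neg_one_pow]
      have hμm : ArithmeticFunction.moebius m = 1 := by
        have := hμsplit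
        rw [hμr, hμ2] at this
        linarith
      -- m has at least two distinct odd prime factors
      obtain ⟨p, hp, hpdvd⟩ := Nat.exists_prime_and_dvd (by omega : m ≠ 1)
      obtain ⟨m₂, hm₂⟩ := hpdvd
      have hsqm : Squarefree (p * m₂) := hm₂ ▸ hmsq
      have hcop : Nat.Coprime p m₂ := (Nat.squarefree_mul_iff.1 hsqm).1
      have hμmsplit : ArithmeticFunction.moebius m
          = ArithmeticFunction.moebius p * ArithmeticFunction.moebius m₂ := by
        rw [hm₂]
        exact ArithmeticFunction.isMultiplicative_moebius.map_mul_of_coprime hcop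
      have hμp : ArithmeticFunction.moebius p = -1 :=
        ArithmeticFunction.moebius_apply_prime hp
      have hμm₂ : ArithmeticFunction.moebius m₂ = -1 := by
        rw [hμm, hμp] at hμmsplit; linarith
      have hm₂ne1 : m₂ ≠ 1 := by
        intro h; rw [h] at hμm₂; simp [ArithmeticFunction.moebius_apply_one] at hμm₂
      obtain ⟨q, hq, hqdvd⟩ := Nat.exists_prime_and_dvd hm₂ne1
      have hpq : p ≠ q := by
        intro h; subst h
        have h1 : p ∣ Nat.gcd p m₂ := Nat.dvd_gcd dvd_rfl hqdvd
        rw [Nat.Coprime.gcd_eq_one hcop] at h1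
        exact hp.ne_one (Nat.eq_one_of_dvd_one h1)
      have hpodd : Odd p := by
        rcases hp.eq_two_or_odd' with h2 | ho
        · exfalso; subst h2
          exact (Nat.not_odd_iff_even.2 ⟨m₂ * 1, by omega⟩) hmodd
        · exact ho
      have hqodd : Odd q := by
        rcases hq.eq_two_or_odd' with h2 | ho
        · exfalso; subst h2
          have : (2:ℕ) ∣ m := hm₂ ▸ (hqdvd.mul_left p)
          obtain ⟨c, hc⟩ := this
          exact (Nat.not_odd_iff_even.2 ⟨c, by omega⟩) hmodd
        · exact ho
      have hcoppq : Nat.Coprime p q := (Nat.coprime_primes hp hq).2 hpq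
      have hpqdvd : p * q ∣ m := by
        rw [hm₂]
        exact mul_dvd_mul_left p hqdvd
      have htotpq : Nat.totient (p * q) = (p - 1) * (q - 1) := by
        rw [Nat.totient_mul hcoppq, Nat.totient_prime hp, Nat.totient_prime hq]
      have h8 : 8 ≤ Nat.totient (p * q) := by
        rw [htotpq]
        have hp3 : 3 ≤ p := by
          rcases hpodd with ⟨k, hk⟩; have := hp.two_le; omega
        have hq3 : 3 ≤ q := by
          rcases hqodd with ⟨k, hk⟩; have := hq.two_le; omega
        rcases Nat.lt_or_ge p q with hlt | hge
        · have hq5 : 5 ≤ q := by rcases hqodd with ⟨k, hk⟩; omega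
          calc 8 = 2 * 4 := rfl
          _ ≤ (p-1) * (q-1) := Nat.mul_le_mul (by omega) (by omega)
        · have hplt : q < p := lt_of_le_of_ne hge (Ne.symm hpq)
          have hp5 : 5 ≤ p := by rcases hpodd with ⟨k, hk⟩; omega
          calc 8 = 4 * 2 := rfl
          _ ≤ (p-1) * (q-1) := Nat.mul_le_mul (by omega) (by omega)
      have hdvdtot : Nat.totient (p * q) ∣ Nat.totient r :=
        Nat.totient_dvd_of_dvd (hpqdvd.trans hmdvd)
      have htotr0 : 0 < Nat.totient r := Nat.totient_pos.2 (by omega)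
      have : 8 ≤ Nat.totient r := le_trans h8 (Nat.le_of_dvd htotr0 hdvdtot)
      have : (8:ℤ) ≤ (Nat.totient r : ℤ) := by exact_mod_cast this
      linarith
  · rw [ArithmeticFunction.moebius_eq_zero_of_not_squarefree hsq]
    linarith

end GridBD

namespace GridBD

lemma pow_primitive {K : ℕ} (hK : 0 < K) {ζ : ℂ} (hζ : IsPrimitiveRoot ζ K) (u : ℕ) :
    IsPrimitiveRoot (ζ ^ u) (K / Nat.gcd K u) := by
  have hd0 : 0 < Nat.gcd K u := Nat.gcd_pos_of_pos_left _ hK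
  have hKdr : K = Nat.gcd K u * (K / Nat.gcd K u) :=
    (Nat.mul_div_cancel' (Nat.gcd_dvd_left K u)).symm
  have h1 : IsPrimitiveRoot (ζ ^ Nat.gcd K u) (K / Nat.gcd K u) := hζ.pow hK hKdr
  have h2 : Nat.Coprime (u / Nat.gcd K u) (K / Nat.gcd K u) :=
    (Nat.coprime_div_gcd_div_gcd hd0).symm
  have h3 : (ζ ^ Nat.gcd K u) ^ (u / Nat.gcd K u) = ζ ^ u := by
    rw [← pow_mul, Nat.mul_div_cancel' (Nat.gcd_dvd_right K u)]
  rw [← h3]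
  exact h1.pow_of_coprime _ h2

lemma five_roots {η₁ η₂ : ℂ} {r₁ r₂ : ℕ} (h₁ : IsPrimitiveRoot η₁ r₁)
    (h₂ : IsPrimitiveRoot η₂ r₂) (e₁ : Even r₁) (e₂ : Even r₂)
    (g₁ : 4 ≤ r₁) (g₂ : 4 ≤ r₂) :
    1 + η₁ + η₁⁻¹ + η₂ + η₂⁻¹ ≠ 0 := by
  intro heq
  set K := Nat.lcm r₁ r₂ with hKdef
  have hr₁0 : 0 < r₁ := by omega
  have hr₂0 : 0 < r₂ := by omega
  have hK0 : 0 < K := Nat.pos_of_ne_zero (Nat.lcm_ne_zero hr₁0.ne' hr₂0.ne')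
  haveI : NeZero K := ⟨hK0.ne'⟩
  have hζ : IsPrimitiveRoot (Complex.exp (2 * Real.pi * Complex.I / K)) K :=
    Complex.isPrimitiveRoot_exp K hK0.ne'
  set ζ := Complex.exp (2 * Real.pi * Complex.I / K) with hζdef
  have hζ0 : ζ ≠ 0 := hζ.ne_zero hK0.ne'
  have hζK : ζ ^ K = 1 := hζ.pow_eq_one
  obtain ⟨x, hxK, hx⟩ := hζ.eq_pow_of_pow_eq_one
    ((h₁.pow_eq_one_iff_dvd K).2 (Nat.dvd_lcm_left r₁ r₂))
  obtain ⟨y, hyK, hy⟩ := hζ.eq_pow_of_pow_eq_one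
    ((h₂.pow_eq_one_iff_dvd K).2 (Nat.dvd_lcm_right r₁ r₂))
  have hr₁x : r₁ = K / Nat.gcd K x := h₁.unique (hx ▸ pow_primitive hK0 hζ x)
  have hr₂y : r₂ = K / Nat.gcd K y := h₂.unique (hy ▸ pow_primitive hK0 hζ y)
  have hgcdx : Nat.gcd K (K - x) = Nat.gcd K x := by
    apply Nat.dvd_antisymm
    · exact Nat.dvd_gcd (Nat.gcd_dvd_left _ _)
        (by
          have h4 : Nat.gcd K (K - x) ∣ K - (K - x) :=
            Nat.dvd_sub (Nat.gcd_dvd_left _ _) (Nat.gcd_dvd_right _ _)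
          rwa [Nat.sub_sub_self hxK.le] at h4)
    · exact Nat.dvd_gcd (Nat.gcd_dvd_left _ _)
        (Nat.dvd_sub (Nat.gcd_dvd_left _ _) (Nat.gcd_dvd_right _ _))
  have hgcdy : Nat.gcd K (K - y) = Nat.gcd K y := by
    apply Nat.dvd_antisymm
    · exact Nat.dvd_gcd (Nat.gcd_dvd_left _ _)
        (by
          have h4 : Nat.gcd K (K - y) ∣ K - (K - y) :=
            Nat.dvd_sub (Nat.gcd_dvd_left _ _) (Nat.gcd_dvd_right _ _)
          rwa [Nat.sub_sub_self hyK.le] at h4)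
    · exact Nat.dvd_gcd (Nat.gcd_dvd_left _ _)
        (Nat.dvd_sub (Nat.gcd_dvd_left _ _) (Nat.gcd_dvd_right _ _))
  -- the polynomial with rational coefficients
  set P : Polynomial ℚ := 1 + Polynomial.X ^ x + Polynomial.X ^ (K - x)
      + Polynomial.X ^ y + Polynomial.X ^ (K - y) with hPdef
  have hPeval : ∀ z : ℂ, Polynomial.aeval z P
      = 1 + z ^ x + z ^ (K - x) + z ^ y + z ^ (K - y) := by
    intro z
    simp [hPdef]
  have hinv : ∀ u : ℕ, u < K → (ζ ^ u)⁻¹ = ζ ^ (K - u) := by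
    intro u hu
    rw [pow_sub₀ ζ hζ0 hu.le, hζK, one_mul, eq_comm]
  have hPζ : Polynomial.aeval ζ P = 0 := by
    rw [hPeval, ← hinv x hxK, ← hinv y hyK, hx, hy]
    linear_combination heq
  have hdvd : minpoly ℚ ζ ∣ P := minpoly.dvd ℚ ζ hPζ
  rw [← Polynomial.cyclotomic_eq_minpoly_rat hζ hK0] at hdvd
  -- conjugate equations
  have hconj : ∀ t ∈ (Finset.range K).filter K.Coprime,
      (1 : ℂ) + ζ ^ (t * x) + ζ ^ (t * (K - x)) + ζ ^ (t * y) + ζ ^ (t * (K - y)) = 0 := by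
    intro t ht
    obtain ⟨htr, htc⟩ := Finset.mem_filter.1 ht
    have hprim : IsPrimitiveRoot (ζ ^ t) K := hζ.pow_of_coprime t htc.symm
    have hroot : Polynomial.aeval (ζ ^ t) (Polynomial.cyclotomic K ℚ) = 0 := by
      have := (IsPrimitiveRoot.isRoot_cyclotomic hK0 hprim)
      rw [Polynomial.IsRoot.def] at this
      rw [Polynomial.aeval_def, ← Polynomial.eval_map, Polynomial.map_cyclotomic]
      exact this
    obtain ⟨Q, hQ⟩ := hdvd
    have : Polynomial.aeval (ζ ^ t) P = 0 := by
      rw [hQ, map_mul, hroot, zero_mul]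
    rw [hPeval] at this
    simpa [← pow_mul, mul_comm] using this
  -- sum over all t
  obtain ⟨κ₁, hκ₁0, hκ₁tot, hκ₁sum⟩ := ramanujan_sum hK0 hζ x
  obtain ⟨κ₁', hκ₁'0, hκ₁'tot, hκ₁'sum⟩ := ramanujan_sum hK0 hζ (K - x)
  obtain ⟨κ₂, hκ₂0, hκ₂tot, hκ₂sum⟩ := ramanujan_sum hK0 hζ y
  obtain ⟨κ₂', hκ₂'0, hκ₂'tot, hκ₂'sum⟩ := ramanujan_sum hK0 hζ (K - y)
  rw [hgcdx] at hκ₁'tot hκ₁'sum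
  rw [hgcdy] at hκ₂'tot hκ₂'sum
  rw [← hr₁x] at hκ₁tot hκ₁'tot hκ₁sum hκ₁'sum
  rw [← hr₂y] at hκ₂tot hκ₂'tot hκ₂sum hκ₂'sum
  have htot₁pos : 0 < r₁.totient := Nat.totient_pos.2 hr₁0
  have htot₂pos : 0 < r₂.totient := Nat.totient_pos.2 hr₂0
  have hκκ₁ : κ₁' = κ₁ := Nat.eq_of_mul_eq_mul_right htot₁pos (hκ₁'tot.symm.trans hκ₁tot)
  have hκκ₂ : κ₂' = κ₂ := Nat.eq_of_mul_eq_mul_right htot₂pos (hκ₂'tot.symm.trans hκ₂tot)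
  rw [hκκ₁] at hκ₁'sum
  rw [hκκ₂] at hκ₂'sum
  have hcard : ((Finset.range K).filter K.Coprime).card = K.totient := rfl
  have hsum := Finset.sum_congr rfl hconj
  rw [Finset.sum_const_zero, Finset.sum_add_distrib, Finset.sum_add_distrib,
    Finset.sum_add_distrib, Finset.sum_add_distrib, Finset.sum_const, hcard,
    hκ₁sum, hκ₁'sum, hκ₂sum, hκ₂'sum] at hsum
  have hZ : (K.totient : ℤ) + 2 * κ₁ * ArithmeticFunction.moebius r₁
      + 2 * κ₂ * ArithmeticFunction.moebius r₂ = 0 := by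
    have hc : (((K.totient : ℤ) + 2 * κ₁ * ArithmeticFunction.moebius r₁
        + 2 * κ₂ * ArithmeticFunction.moebius r₂ : ℤ) : ℂ) = 0 := by
      push_cast
      rw [nsmul_eq_mul] at hsum
      push_cast at hsum
      linear_combination hsum
    exact_mod_cast hc
  -- bounds
  have hb₁ := moebius_totient_bound e₁ g₁
  have hb₂ := moebius_totient_bound e₂ g₂
  have hm₁ : -(κ₁ : ℤ) * r₁.totient ≤ 8 * (κ₁ * ArithmeticFunction.moebius r₁) := by
    have := mul_le_mul_of_nonneg_left hb₁ (by positivity : (0:ℤ) ≤ (κ₁:ℤ))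
    linarith [this]
  have hm₂ : -(κ₂ : ℤ) * r₂.totient ≤ 8 * (κ₂ * ArithmeticFunction.moebius r₂) := by
    have := mul_le_mul_of_nonneg_left hb₂ (by positivity : (0:ℤ) ≤ (κ₂:ℤ))
    linarith [this]
  have htotK : (K.totient : ℤ) = κ₁ * r₁.totient := by exact_mod_cast hκ₁tot
  have htotK₂ : (K.totient : ℤ) = κ₂ * r₂.totient := by exact_mod_cast hκ₂tot
  have hKpos : (0:ℤ) < K.totient := by exact_mod_cast Nat.totient_pos.2 hK0
  linarith
end GridBD


namespace GridBD

lemma inv_key (z : ℂ) (h0 : z ≠ 0) (h1 : z ≠ 1) : (z - 1)⁻¹ + (z⁻¹ - 1)⁻¹ = -1 := by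
  have h2 : z - 1 ≠ 0 := sub_ne_zero.2 h1
  have h3 : z⁻¹ - 1 ≠ 0 := sub_ne_zero.2 (by rwa [Ne, inv_eq_one])
  have h4 : (1:ℂ) - z ≠ 0 := fun h => h1 (by linear_combination -h)
  field_simp
  ring

section Hsums

variable {M : ℕ} {ζ : ℂ} (hM : 2 ≤ M) (hζ : IsPrimitiveRoot ζ (2 * M))

include hM hζ

lemma zetaM : ζ ^ (M : ℤ) = -1 := by
  have h0 : ζ ^ (2 * M) = 1 := hζ.pow_eq_one
  have h1 : (ζ ^ (M:ℤ)) ^ 2 = 1 := by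
    rw [← zpow_natCast (ζ ^ (M:ℤ)) 2, ← zpow_mul]
    rw [← zpow_natCast ζ (2*M)] at h0
    rw [← h0]
    congr 1
    push_cast
    ring
  have h2 : ζ ^ (M : ℤ) ≠ 1 := by
    rw [zpow_natCast]
    exact hζ.pow_ne_one_of_pos_of_lt (by omega) (by omega)
  have h3 : (ζ ^ (M:ℤ) - 1) * (ζ ^ (M:ℤ) + 1) = 0 := by ring_nf; linear_combination h1
  rcases mul_eq_zero.1 h3 with h | h
  · exact absurd (by linear_combination h) h2
  · linear_combination h

lemma zpow_eq_one_iff {c : ℤ} : ζ ^ c = 1 ↔ ((2 * M : ℕ) : ℤ) ∣ c := by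
  exact hζ.zpow_eq_one_iff_dvd c

lemma H_div {c : ℤ} (hd : ((2 * M : ℕ) : ℤ) ∣ c) :
    ∑ a ∈ Finset.range M, ((ζ ^ c) ^ a + ((ζ ^ c)⁻¹) ^ a) = 2 * M := by
  have hz : ζ ^ c = 1 := (zpow_eq_one_iff hM hζ).2 hd
  rw [hz]
  simp
  ring

lemma H_even {c : ℤ} (hc : Even c) (hnd : ¬ ((2 * M : ℕ) : ℤ) ∣ c) :
    ∑ a ∈ Finset.range M, ((ζ ^ c) ^ a + ((ζ ^ c)⁻¹) ^ a) = 0 := by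
  have hζ0 : ζ ≠ 0 := hζ.ne_zero (by omega)
  set z := ζ ^ c with hz
  have hz0 : z ≠ 0 := zpow_ne_zero _ hζ0
  have hz1 : z ≠ 1 := fun h => hnd ((zpow_eq_one_iff hM hζ).1 h)
  have hzM : z ^ M = 1 := by
    rw [hz, ← zpow_natCast (ζ ^ c) M, ← zpow_mul, mul_comm, zpow_mul, zetaM hM hζ]
    exact hc.neg_one_zpow
  have hzM' : (z⁻¹) ^ M = 1 := by
    rw [inv_pow, hzM, inv_one]
  have hz1' : z⁻¹ ≠ 1 := by rwa [Ne, inv_eq_one]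
  rw [Finset.sum_add_distrib, geom_sum_eq hz1, geom_sum_eq hz1', hzM, hzM']
  simp

lemma H_odd {c : ℤ} (hc : Odd c) :
    ∑ a ∈ Finset.range M, ((ζ ^ c) ^ a + ((ζ ^ c)⁻¹) ^ a) = 2 := by
  have hζ0 : ζ ≠ 0 := hζ.ne_zero (by omega)
  set z := ζ ^ c with hz
  have hz0 : z ≠ 0 := zpow_ne_zero _ hζ0
  have hz1 : z ≠ 1 := by
    intro h
    obtain ⟨k, hk⟩ := (zpow_eq_one_iff hM hζ).1 h
    have h2d : (2:ℤ) ∣ c := ⟨(M:ℤ) * k, by push_cast at hk ⊢; linarith [hk]⟩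
    rcases hc with ⟨j, hj⟩
    omega
  have hzM : z ^ M = -1 := by
    rw [hz, ← zpow_natCast (ζ ^ c) M, ← zpow_mul, mul_comm, zpow_mul, zetaM hM hζ]
    exact hc.neg_one_zpow
  have hzM' : (z⁻¹) ^ M = -1 := by
    rw [inv_pow, hzM, inv_neg, inv_one]
  have hz1' : z⁻¹ ≠ 1 := by rwa [Ne, inv_eq_one]
  rw [Finset.sum_add_distrib, geom_sum_eq hz1, geom_sum_eq hz1', hzM, hzM']
  have expand : ((-1 : ℂ) - 1)/(z-1) + ((-1:ℂ)-1)/(z⁻¹-1) = -2 * ((z-1)⁻¹ + (z⁻¹-1)⁻¹) := by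
    rw [div_eq_mul_inv, div_eq_mul_inv]; ring
  rw [expand, inv_key z hz0 hz1]
  ring

omit hM hζ in
lemma zpow_pow (c : ℤ) (a : ℕ) : (ζ ^ c) ^ a = ζ ^ (c * a) := by
  rw [← zpow_natCast (ζ ^ c) a, ← zpow_mul]

lemma inner_orth {p q : ℕ} (hp1 : 1 ≤ p) (hpM : p < M) (hq1 : 1 ≤ q) (hqM : q < M) :
    ∑ a ∈ Finset.range M,
      ((ζ ^ ((a * p : ℕ) : ℤ) - ζ ^ (-((a * p : ℕ) : ℤ)))
        * (ζ ^ ((a * q : ℕ) : ℤ) - ζ ^ (-((a * q : ℕ) : ℤ))))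
      = if p = q then (-2 * M : ℂ) else 0 := by
  have hζ0 : ζ ≠ 0 := hζ.ne_zero (by omega)
  set c₁ : ℤ := (p : ℤ) + q with hc₁
  set c₂ : ℤ := (p : ℤ) - q with hc₂
  have hterm : ∀ a ∈ Finset.range M,
      ((ζ ^ ((a * p : ℕ) : ℤ) - ζ ^ (-((a * p : ℕ) : ℤ)))
        * (ζ ^ ((a * q : ℕ) : ℤ) - ζ ^ (-((a * q : ℕ) : ℤ))))
      = (((ζ ^ c₁) ^ a + ((ζ ^ c₁)⁻¹) ^ a)) - (((ζ ^ c₂) ^ a + ((ζ ^ c₂)⁻¹) ^ a)) := by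
    intro a _
    rw [zpow_pow, zpow_pow, ← zpow_neg, ← zpow_neg, zpow_pow, zpow_pow]
    have e1 : ζ ^ ((a * p : ℕ) : ℤ) * ζ ^ ((a * q : ℕ) : ℤ) = ζ ^ (c₁ * a) := by
      rw [← zpow_add₀ hζ0]; congr 1; push_cast; ring
    have e2 : ζ ^ (-((a * p : ℕ) : ℤ)) * ζ ^ (-((a * q : ℕ) : ℤ)) = ζ ^ (-c₁ * a) := by
      rw [← zpow_add₀ hζ0]; congr 1; push_cast; ring
    have e3 : ζ ^ ((a * p : ℕ) : ℤ) * ζ ^ (-((a * q : ℕ) : ℤ)) = ζ ^ (c₂ * a) := by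
      rw [← zpow_add₀ hζ0]; congr 1; push_cast; ring
    have e4 : ζ ^ (-((a * p : ℕ) : ℤ)) * ζ ^ ((a * q : ℕ) : ℤ) = ζ ^ (-c₂ * a) := by
      rw [← zpow_add₀ hζ0]; congr 1; push_cast; ring
    linear_combination e1 + e2 - e3 - e4
  rw [Finset.sum_congr rfl hterm, Finset.sum_sub_distrib]
  by_cases hpq : p = q
  · subst hpq
    rw [if_pos rfl]
    have h1 : ∑ a ∈ Finset.range M, ((ζ ^ c₁) ^ a + ((ζ ^ c₁)⁻¹) ^ a) = 0 := by
      apply H_even hM hζ ⟨(p:ℤ), by omega⟩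
      intro hdvd
      have := Int.le_of_dvd (by omega) hdvd
      omega
    have h2 : ∑ a ∈ Finset.range M, ((ζ ^ c₂) ^ a + ((ζ ^ c₂)⁻¹) ^ a) = 2 * M :=
      H_div hM hζ ⟨0, by omega⟩
    rw [h1, h2]; ring
  · rw [if_neg hpq]
    rcases Int.even_or_odd c₁ with hev | hod
    · have hev₂ : Even c₂ := by rcases hev with ⟨t, ht⟩; exact ⟨t - q, by omega⟩
      have h1 : ∑ a ∈ Finset.range M, ((ζ ^ c₁) ^ a + ((ζ ^ c₁)⁻¹) ^ a) = 0 := by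
        apply H_even hM hζ hev
        intro hdvd
        have := Int.le_of_dvd (by omega) hdvd
        omega
      have h2 : ∑ a ∈ Finset.range M, ((ζ ^ c₂) ^ a + ((ζ ^ c₂)⁻¹) ^ a) = 0 := by
        apply H_even hM hζ hev₂
        intro hdvd
        have hc₂ne : c₂ ≠ 0 := fun h => hpq (by omega)
        have habs : ((2*M:ℕ):ℤ) ≤ |c₂| :=
          Int.le_of_dvd (abs_pos.2 hc₂ne) ((dvd_abs _ _).2 hdvd)
        have hlt : |c₂| < ((2*M:ℕ):ℤ) := by
          rw [abs_lt]; constructor <;> push_cast <;> omega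
        omega
      rw [h1, h2]; ring
    · have hod₂ : Odd c₂ := by rcases hod with ⟨t, ht⟩; exact ⟨t - q, by omega⟩
      rw [H_odd hM hζ hod, H_odd hM hζ hod₂]; ring

lemma S_even {m a : ℕ} (hMm : M = m + 1) (ha : Even a) :
    ∑ k ∈ Finset.range m, (ζ ^ ((a * (k+1) : ℕ) : ℤ) - ζ ^ (-((a * (k+1) : ℕ) : ℤ))) = 0 := by
  have hζ0 : ζ ≠ 0 := hζ.ne_zero (by omega)
  rw [Finset.sum_sub_distrib]
  have hrefl := Finset.sum_range_reflect (fun k => ζ ^ ((a * (k+1) : ℕ) : ℤ)) m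
  have hstep : ∀ k ∈ Finset.range m,
      ζ ^ ((a * (m - 1 - k + 1) : ℕ) : ℤ) = ζ ^ (-((a * (k+1) : ℕ) : ℤ)) := by
    intro k hk
    have hkm : k < m := Finset.mem_range.1 hk
    have hexp : ((a * (m - 1 - k + 1) : ℕ) : ℤ) = (a : ℤ) * M - ((a * (k+1) : ℕ) : ℤ) := by
      have h1 : m - 1 - k + 1 = m - k := by omega
      rw [h1, hMm]
      push_cast [Nat.cast_sub hkm.le]
      ring
    rw [hexp, sub_eq_add_neg, zpow_add₀ hζ0]
    have hM1 : ζ ^ ((a:ℤ) * M) = 1 := by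
      rw [mul_comm, zpow_mul, zetaM hM hζ]
      rcases ha with ⟨t, ht⟩
      subst ht
      have h2 : ((t + t : ℕ) : ℤ) = 2 * t := by push_cast; ring
      rw [h2, zpow_mul]
      norm_num
    rw [hM1, one_mul]
  rw [← Finset.sum_congr rfl hstep, hrefl, sub_self]

end Hsums

end GridBD

namespace GridBD
open scoped Classical

lemma ite_or_split {A B : Prop} [Decidable A] [Decidable B] [Decidable (A ∨ B)] (x : ℂ) (hAB : ¬ (A ∧ B)) :
    (if A ∨ B then x else 0) = (if A then x else 0) + (if B then x else 0) := by
  by_cases hA : A <;> by_cases hB : B <;> simp [hA, hB] <;> tauto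

lemma sum_fin_eq {m : ℕ} (φ : ℕ → ℂ) (c : ℕ) :
    ∑ k : Fin m, (if (k : ℕ) = c then φ (k : ℕ) else 0)
      = if c < m then φ c else 0 := by
  split_ifs with h
  · rw [Finset.sum_eq_single (⟨c, h⟩ : Fin m)]
    · simp
    · intro k _ hk
      rw [if_neg]
      intro hkc
      exact hk (Fin.ext hkc)
    · intro hmem
      exact absurd (Finset.mem_univ _) hmem
  · apply Finset.sum_eq_zero
    intro k _
    rw [if_neg]
    intro hk
    exact h (hk ▸ k.isLt)

lemma swap_lemma {V : Type*} [Fintype V] (G : SimpleGraph V) (φ ψ : V → ℂ) :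
    ∑ v, ψ v * (φ v + ∑ u ∈ Finset.univ.filter (fun u => G.Adj v u), φ u)
      = ∑ v, φ v * (ψ v + ∑ u ∈ Finset.univ.filter (fun u => G.Adj v u), ψ u) := by
  have key : ∀ α β : V → ℂ,
      ∑ v, α v * ∑ u ∈ Finset.univ.filter (fun u => G.Adj v u), β u
        = ∑ v, ∑ u, if G.Adj v u then α v * β u else 0 := by
    intro α β
    refine Finset.sum_congr rfl fun v _ => ?_
    rw [Finset.mul_sum, Finset.sum_filter]
  simp only [mul_add]
  rw [Finset.sum_add_distrib, Finset.sum_add_distrib, key ψ φ, key φ ψ]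
  congr 1
  · exact Finset.sum_congr rfl fun v _ => mul_comm _ _
  · rw [Finset.sum_comm]
    refine Finset.sum_congr rfl fun v _ => Finset.sum_congr rfl fun u _ => ?_
    by_cases h : G.Adj u v
    · rw [if_pos h, if_pos (G.adj_comm u v |>.1 h), mul_comm]
    · rw [if_neg h, if_neg (fun h' => h (G.adj_comm v u |>.1 h'))]

end GridBD

namespace GridBD

lemma neighbor_sum {M m : ℕ} {ζ : ℂ} (hM : 2 ≤ M) (hζ : IsPrimitiveRoot ζ (2*M))
    (hMm : M = m + 1) (hm : 3 ≤ m) (a : ℕ) (i : Fin m) :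
    ∑ k : Fin m, (if ((k:ℕ) = (i:ℕ)+1 ∨ (i:ℕ) = (k:ℕ)+1) then
        (ζ ^ ((a*((k:ℕ)+1) : ℕ) : ℤ) - ζ ^ (-((a*((k:ℕ)+1) : ℕ) : ℤ))) else 0)
      = (ζ ^ (a : ℤ) + ζ ^ (-(a : ℤ)))
        * (ζ ^ ((a*((i:ℕ)+1) : ℕ) : ℤ) - ζ ^ (-((a*((i:ℕ)+1) : ℕ) : ℤ))) := by
  have hζ0 : ζ ≠ 0 := hζ.ne_zero (by omega)
  set w : ℕ → ℂ := fun j => ζ ^ ((a*(j+1) : ℕ) : ℤ) - ζ ^ (-((a*(j+1) : ℕ) : ℤ)) with hw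
  have Wfun : ∀ x y : ℤ, x = y → ζ^x - ζ^(-x) = ζ^y - ζ^(-y) := by
    intro x y h; rw [h]
  have trig : ∀ s t : ℤ, (ζ^(s+t) - ζ^(-(s+t))) + (ζ^(s-t) - ζ^(-(s-t)))
      = (ζ^t + ζ^(-t)) * (ζ^s - ζ^(-s)) := by
    intro s t
    simp only [sub_eq_add_neg, neg_add, neg_neg, zpow_add₀ hζ0]
    ring
  have hbound : ζ ^ ((a*M : ℕ) : ℤ) - ζ ^ (-((a*M : ℕ) : ℤ)) = 0 := by
    rw [Wfun _ ((M:ℤ) * a) (by push_cast; ring), zpow_neg, zpow_mul, zetaM hM hζ]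
    rcases Int.even_or_odd (a:ℤ) with he | ho
    · rw [he.neg_one_zpow]; norm_num
    · rw [ho.neg_one_zpow]; norm_num
  set s : ℤ := ((a*((i:ℕ)+1) : ℕ) : ℤ) with hs
  have hsplit : ∀ k : Fin m, (if ((k:ℕ) = (i:ℕ)+1 ∨ (i:ℕ) = (k:ℕ)+1) then w (k:ℕ) else 0)
      = (if (k:ℕ) = (i:ℕ)+1 then w (k:ℕ) else 0) + (if (i:ℕ) = (k:ℕ)+1 then w (k:ℕ) else 0) := by
    intro k
    apply ite_or_split
    omega
  rw [Finset.sum_congr rfl (fun k _ => hsplit k), Finset.sum_add_distrib, sum_fin_eq w ((i:ℕ)+1)]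
  have h2 : ∑ k : Fin m, (if (i:ℕ) = (k:ℕ)+1 then w (k:ℕ) else 0)
      = if 1 ≤ (i:ℕ) then w ((i:ℕ)-1) else 0 := by
    rcases Nat.eq_zero_or_pos (i:ℕ) with h0 | h1
    · rw [if_neg (by omega)]
      apply Finset.sum_eq_zero
      intro k _
      rw [if_neg (by omega)]
    · rw [if_pos (by omega : 1 ≤ (i:ℕ))]
      have hcond : ∀ k : Fin m, (if (i:ℕ) = (k:ℕ)+1 then w (k:ℕ) else 0)
          = (if (k:ℕ) = (i:ℕ)-1 then w (k:ℕ) else 0) :=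
        fun k => if_congr (by omega) rfl rfl
      rw [Finset.sum_congr rfl (fun k _ => hcond k), sum_fin_eq w ((i:ℕ)-1),
        if_pos (by omega : (i:ℕ)-1 < m)]
  rw [h2]
  have e1 : w ((i:ℕ)+1) = ζ^(s + a) - ζ^(-(s+a)) :=
    Wfun _ _ (by rw [hs]; push_cast; ring)
  rcases Nat.eq_zero_or_pos (i:ℕ) with h0 | hge1
  · rw [if_pos (by omega : (i:ℕ)+1 < m), if_neg (by omega)]
    have t2 : ζ^(s - a) - ζ^(-(s - a)) = 0 := by
      rw [Wfun _ 0 (by rw [hs]; push_cast [h0]; ring)]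
      simp
    rw [e1]
    linear_combination trig s a - t2
  · rcases lt_or_ge ((i:ℕ)+1) m with hmid | htop
    · rw [if_pos hmid, if_pos (by omega)]
      have e2 : w ((i:ℕ)-1) = ζ^(s - a) - ζ^(-(s - a)) := by
        apply Wfun
        have hnat : a*(((i:ℕ)-1)+1) = a*(i:ℕ) := by
          congr 1
          omega
        rw [hnat, hs]
        push_cast
        ring
      rw [e1, e2]
      linear_combination trig s a
    · rw [if_neg (by omega), if_pos (by omega)]
      have hb2 : ζ^(s + a) - ζ^(-(s + a)) = 0 := by
        rw [Wfun _ ((a*M : ℕ) : ℤ) ?_]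
        · exact hbound
        · have hnat : a*M = a*(((i:ℕ)+1)+1) := by
            congr 1
            omega
          rw [hnat, hs]
          push_cast
          ring
      have e2 : w ((i:ℕ)-1) = ζ^(s - a) - ζ^(-(s - a)) := by
        apply Wfun
        have hnat : a*(((i:ℕ)-1)+1) = a*(i:ℕ) := by
          congr 1
          omega
        rw [hnat, hs]
        push_cast
        ring
      rw [e2]
      linear_combination trig s a - hb2

end GridBD


namespace GridBD

/-- sine-like test functions -/
noncomputable def wfun (ζ : ℂ) (a j : ℕ) : ℂ :=
  ζ ^ ((a*(j+1) : ℕ) : ℤ) - ζ ^ (-((a*(j+1) : ℕ) : ℤ))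

lemma neighbor_sum' {M m : ℕ} {ζ : ℂ} (hM : 2 ≤ M) (hζ : IsPrimitiveRoot ζ (2*M))
    (hMm : M = m + 1) (hm : 3 ≤ m) (a : ℕ) (i : Fin m) :
    ∑ k : Fin m, (if ((k:ℕ) = (i:ℕ)+1 ∨ (i:ℕ) = (k:ℕ)+1) then wfun ζ a (k:ℕ) else 0)
      = (ζ ^ (a : ℤ) + ζ ^ (-(a : ℤ))) * wfun ζ a (i:ℕ) := by
  simp only [wfun]
  exact neighbor_sum hM hζ hMm hm a i

lemma inner_orth' {M : ℕ} {ζ : ℂ} (hM : 2 ≤ M) (hζ : IsPrimitiveRoot ζ (2*M))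
    {k i : ℕ} (hk : k < M - 1) (hi : i < M - 1) :
    ∑ a ∈ Finset.range M, wfun ζ a k * wfun ζ a i = if k = i then (-2*M : ℂ) else 0 := by
  simp only [wfun]
  have h := inner_orth hM hζ (p := k+1) (q := i+1)
    (by omega) (by omega) (by omega) (by omega)
  rw [h]
  exact if_congr (by omega) rfl rfl

lemma S_even' {M m a : ℕ} {ζ : ℂ} (hM : 2 ≤ M) (hζ : IsPrimitiveRoot ζ (2*M))
    (hMm : M = m + 1) (ha : Even a) :
    ∑ k ∈ Finset.range m, wfun ζ a k = 0 := by
  simp only [wfun]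
  exact S_even hM hζ hMm ha

lemma grid_adj_iff {m n : ℕ} (v u : Fin m × Fin n) :
    (gridGraph m n).Adj v u ↔
      ((v.1 = u.1 ∧ ((u.2:ℕ) = (v.2:ℕ)+1 ∨ (v.2:ℕ) = (u.2:ℕ)+1)) ∨
       (v.2 = u.2 ∧ ((u.1:ℕ) = (v.1:ℕ)+1 ∨ (v.1:ℕ) = (u.1:ℕ)+1))) := by
  rw [gridGraph, SimpleGraph.fromRel_adj]
  constructor
  · rintro ⟨hne, (⟨h1,h2⟩|⟨h1,h2⟩)|(⟨h1,h2⟩|⟨h1,h2⟩)⟩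
    · exact Or.inl ⟨h1, Or.inl h2⟩
    · exact Or.inr ⟨h1, Or.inl h2⟩
    · exact Or.inl ⟨h1.symm, Or.inr h2⟩
    · exact Or.inr ⟨h1.symm, Or.inr h2⟩
  · rintro (⟨h1, h2|h2⟩|⟨h1, h2|h2⟩)
    · exact ⟨fun h => by rw [h] at h2; omega, Or.inl (Or.inl ⟨h1, h2⟩)⟩
    · exact ⟨fun h => by rw [h] at h2; omega, Or.inr (Or.inl ⟨h1.symm, h2⟩)⟩
    · exact ⟨fun h => by rw [h] at h2; omega, Or.inl (Or.inr ⟨h1, h2⟩)⟩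
    · exact ⟨fun h => by rw [h] at h2; omega, Or.inr (Or.inr ⟨h1.symm, h2⟩)⟩

end GridBD

namespace GridBD
open scoped Classical

theorem bdf_sum_zero {m n : ℕ} (hm : 3 ≤ m) (hn : 3 ≤ n)
    (f : Fin m × Fin n → ℤ) (hf : IsBDF (gridGraph m n) f) : ∑ v, f v = 0 := by
  set M := m + 1 with hMdef
  set N := n + 1 with hNdef
  have hM : 2 ≤ M := by omega
  have hN : 2 ≤ N := by omega
  have hζM : IsPrimitiveRoot (Complex.exp (2*Real.pi*Complex.I/((2*M : ℕ) : ℂ))) (2*M) :=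
    Complex.isPrimitiveRoot_exp _ (by omega)
  have hζN : IsPrimitiveRoot (Complex.exp (2*Real.pi*Complex.I/((2*N : ℕ) : ℂ))) (2*N) :=
    Complex.isPrimitiveRoot_exp _ (by omega)
  set ζM : ℂ := Complex.exp (2*Real.pi*Complex.I/((2*M : ℕ) : ℂ)) with hζMdef
  set ζN : ℂ := Complex.exp (2*Real.pi*Complex.I/((2*N : ℕ) : ℂ)) with hζNdef
  set g : Fin m × Fin n → ℂ := fun v => (f v : ℂ) with hgdef
  set lam : ℕ → ℕ → ℂ := fun a b =>
    1 + ζM^((a:ℤ)) + ζM^(-(a:ℤ)) + ζN^((b:ℤ)) + ζN^(-(b:ℤ)) with hlamdef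
  set W : ℕ → ℕ → Fin m × Fin n → ℂ :=
    fun a b v => wfun ζM a ((v.1:ℕ)) * wfun ζN b ((v.2:ℕ)) with hWdef
  set Fab : ℕ → ℕ → ℂ := fun a b => ∑ v, g v * W a b v with hFabdef
  -- the BDF condition over ℂ
  have hbdf : ∀ v, g v + ∑ u ∈ Finset.univ.filter (fun u => (gridGraph m n).Adj v u), g u = 0 := by
    intro v
    have h0 := hf.2 v
    have h1 : ((closedSum (gridGraph m n) f v : ℤ) : ℂ) = 0 := by rw [h0]; norm_num
    simp only [closedSum] at h1
    push_cast at h1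
    exact h1
  -- eigen equation
  have eig : ∀ a b : ℕ, ∀ v,
      W a b v + ∑ u ∈ Finset.univ.filter (fun u => (gridGraph m n).Adj v u), W a b u
        = lam a b * W a b v := by
    intro a b v
    rw [Finset.sum_filter]
    have hsplit : ∀ u : Fin m × Fin n, (if (gridGraph m n).Adj v u then W a b u else 0)
        = (if (v.1 = u.1 ∧ ((u.2:ℕ) = (v.2:ℕ)+1 ∨ (v.2:ℕ) = (u.2:ℕ)+1)) then W a b u else 0)
          + (if (v.2 = u.2 ∧ ((u.1:ℕ) = (v.1:ℕ)+1 ∨ (v.1:ℕ) = (u.1:ℕ)+1)) then W a b u else 0) := by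
      intro u
      rw [if_congr (grid_adj_iff v u) rfl rfl]
      apply ite_or_split
      rintro ⟨⟨hA1, hA2⟩, hB1, hB2⟩
      have hv := congrArg Fin.val hB1
      omega
    rw [Finset.sum_congr rfl fun u _ => hsplit u, Finset.sum_add_distrib]
    have hterm1 : ∑ u : Fin m × Fin n,
        (if (v.1 = u.1 ∧ ((u.2:ℕ) = (v.2:ℕ)+1 ∨ (v.2:ℕ) = (u.2:ℕ)+1)) then W a b u else 0)
        = wfun ζM a ((v.1:ℕ)) * ((ζN^((b:ℤ)) + ζN^(-(b:ℤ))) * wfun ζN b ((v.2:ℕ))) := by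
      rw [Fintype.sum_prod_type]
      have hfac : ∀ (k : Fin m) (l : Fin n),
          (if (v.1 = k ∧ ((l:ℕ) = (v.2:ℕ)+1 ∨ (v.2:ℕ) = (l:ℕ)+1)) then W a b (k,l) else 0)
            = (if v.1 = k then wfun ζM a (k:ℕ) else 0)
              * (if ((l:ℕ) = (v.2:ℕ)+1 ∨ (v.2:ℕ) = (l:ℕ)+1) then wfun ζN b (l:ℕ) else 0) := by
        intro k l
        by_cases h1 : v.1 = k <;>
          by_cases h2 : ((l:ℕ) = (v.2:ℕ)+1 ∨ (v.2:ℕ) = (l:ℕ)+1) <;>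
          simp [h1, h2, hWdef]
      rw [Finset.sum_congr rfl fun k _ => Finset.sum_congr rfl fun l _ => hfac k l,
        ← Finset.sum_mul_sum, Finset.sum_ite_eq, if_pos (Finset.mem_univ _),
        neighbor_sum' hN hζN hNdef hn b v.2]
    have hterm2 : ∑ u : Fin m × Fin n,
        (if (v.2 = u.2 ∧ ((u.1:ℕ) = (v.1:ℕ)+1 ∨ (v.1:ℕ) = (u.1:ℕ)+1)) then W a b u else 0)
        = ((ζM^((a:ℤ)) + ζM^(-(a:ℤ))) * wfun ζM a ((v.1:ℕ))) * wfun ζN b ((v.2:ℕ)) := by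
      rw [Fintype.sum_prod_type]
      have hfac : ∀ (k : Fin m) (l : Fin n),
          (if (v.2 = l ∧ ((k:ℕ) = (v.1:ℕ)+1 ∨ (v.1:ℕ) = (k:ℕ)+1)) then W a b (k,l) else 0)
            = (if ((k:ℕ) = (v.1:ℕ)+1 ∨ (v.1:ℕ) = (k:ℕ)+1) then wfun ζM a (k:ℕ) else 0)
              * (if v.2 = l then wfun ζN b (l:ℕ) else 0) := by
        intro k l
        by_cases h1 : v.2 = l <;>
          by_cases h2 : ((k:ℕ) = (v.1:ℕ)+1 ∨ (v.1:ℕ) = (k:ℕ)+1) <;>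
          simp [h1, h2, hWdef]
      rw [Finset.sum_congr rfl fun k _ => Finset.sum_congr rfl fun l _ => hfac k l,
        ← Finset.sum_mul_sum, Finset.sum_ite_eq, if_pos (Finset.mem_univ _),
        neighbor_sum' hM hζM hMdef hm a v.1]
    rw [hterm1, hterm2]
    simp only [hWdef, hlamdef]
    ring
  -- lam * Fab = 0
  have key : ∀ a b : ℕ, lam a b * Fab a b = 0 := by
    intro a b
    have h1 : ∑ v, W a b v * (g v + ∑ u ∈ Finset.univ.filter
        (fun u => (gridGraph m n).Adj v u), g u) = 0 :=
      Finset.sum_eq_zero fun v _ => by rw [hbdf v, mul_zero]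
    rw [swap_lemma (gridGraph m n) g (W a b)] at h1
    have h2 : ∑ v, g v * (lam a b * W a b v) = 0 := by
      rw [← h1]
      exact Finset.sum_congr rfl fun v _ => by rw [eig a b v]
    calc lam a b * Fab a b = ∑ v, g v * (lam a b * W a b v) := by
          simp only [hFabdef]
          rw [Finset.mul_sum]
          exact Finset.sum_congr rfl fun v _ => by ring
      _ = 0 := h2
  -- nonvanishing of lam for odd a b in range
  have hard : ∀ a b : ℕ, Odd a → a ≤ m → Odd b → b ≤ n → lam a b ≠ 0 := by
    have main : ∀ (L : ℕ) (ζ : ℂ) (c : ℕ), 2 ≤ L → IsPrimitiveRoot ζ (2*L) → Odd c →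
        c ≤ L - 1 → IsPrimitiveRoot (ζ ^ c) (2*L / Nat.gcd (2*L) c)
          ∧ Even (2*L / Nat.gcd (2*L) c) ∧ 4 ≤ 2*L / Nat.gcd (2*L) c := by
      intro L ζ c hL hζ hco hcle
      have h2L : 0 < 2*L := by omega
      have hprim := pow_primitive h2L hζ c
      set gL := Nat.gcd (2*L) c with hgL
      have hc1 : 1 ≤ c := by rcases hco with ⟨t, ht⟩; omega
      have hgodd : ¬ 2 ∣ gL := by
        intro h
        have : 2 ∣ c := h.trans (Nat.gcd_dvd_right _ _)
        rcases hco with ⟨t, ht⟩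
        omega
      have hgdvdL : gL ∣ L := by
        have hcop : Nat.Coprime gL 2 :=
          ((Nat.Prime.coprime_iff_not_dvd Nat.prime_two).2 hgodd).symm
        exact hcop.dvd_of_dvd_mul_left (Nat.gcd_dvd_left _ _)
      have hgpos : 0 < gL := Nat.gcd_pos_of_pos_left _ h2L
      have hglt : gL < L :=
        lt_of_le_of_lt (Nat.le_of_dvd (by omega) (Nat.gcd_dvd_right _ _)) (by omega)
      have hLg2 : 2 ≤ L / gL := by
        by_contra h
        push_neg at h
        have hmul := Nat.div_mul_cancel hgdvdL
        have : L / gL * gL ≤ 1 * gL := Nat.mul_le_mul_right gL (by omega)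
        omega
      have hr1 : 2*L / gL = 2 * (L / gL) := Nat.mul_div_assoc 2 hgdvdL
      refine ⟨hprim, ?_, ?_⟩
      · rw [hr1]; exact even_two_mul _
      · rw [hr1]; omega
    intro a b hao ham hbo hbn
    obtain ⟨hprim1, hev1, h41⟩ := main M ζM a hM hζM hao (by omega)
    obtain ⟨hprim2, hev2, h42⟩ := main N ζN b hN hζN hbo (by omega)
    have h5 := five_roots hprim1 hprim2 hev1 hev2 h41 h42
    have hre : lam a b = 1 + ζM^a + (ζM^a)⁻¹ + ζN^b + (ζN^b)⁻¹ := by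
      simp only [hlamdef]
      rw [zpow_neg, zpow_neg, zpow_natCast, zpow_natCast]
    rw [hre]
    exact h5
  -- row/column completeness identities
  have final_row : ∀ i : Fin m,
      ∑ a ∈ Finset.range M, (∑ k ∈ Finset.range m, wfun ζM a k) * wfun ζM a ((i:ℕ))
        = (-2*M : ℂ) := by
    intro i
    calc ∑ a ∈ Finset.range M, (∑ k ∈ Finset.range m, wfun ζM a k) * wfun ζM a ((i:ℕ))
        = ∑ a ∈ Finset.range M, ∑ k ∈ Finset.range m, wfun ζM a k * wfun ζM a ((i:ℕ)) :=
          Finset.sum_congr rfl fun a _ => Finset.sum_mul _ _ _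
      _ = ∑ k ∈ Finset.range m, ∑ a ∈ Finset.range M, wfun ζM a k * wfun ζM a ((i:ℕ)) :=
          Finset.sum_comm
      _ = ∑ k ∈ Finset.range m, (if k = (i:ℕ) then (-2*M : ℂ) else 0) :=
          Finset.sum_congr rfl fun k hk =>
            inner_orth' hM hζM (by have := Finset.mem_range.1 hk; omega)
              (by have := i.isLt; omega)
      _ = (-2*M : ℂ) := by
          rw [Finset.sum_ite_eq' (Finset.range m) ((i:ℕ)) (fun _ => (-2*M : ℂ)),
            if_pos (Finset.mem_range.2 i.isLt)]
  have final_col : ∀ j : Fin n,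
      ∑ b ∈ Finset.range N, (∑ k ∈ Finset.range n, wfun ζN b k) * wfun ζN b ((j:ℕ))
        = (-2*N : ℂ) := by
    intro j
    calc ∑ b ∈ Finset.range N, (∑ k ∈ Finset.range n, wfun ζN b k) * wfun ζN b ((j:ℕ))
        = ∑ b ∈ Finset.range N, ∑ k ∈ Finset.range n, wfun ζN b k * wfun ζN b ((j:ℕ)) :=
          Finset.sum_congr rfl fun b _ => Finset.sum_mul _ _ _
      _ = ∑ k ∈ Finset.range n, ∑ b ∈ Finset.range N, wfun ζN b k * wfun ζN b ((j:ℕ)) :=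
          Finset.sum_comm
      _ = ∑ k ∈ Finset.range n, (if k = (j:ℕ) then (-2*N : ℂ) else 0) :=
          Finset.sum_congr rfl fun k hk =>
            inner_orth' hN hζN (by have := Finset.mem_range.1 hk; omega)
              (by have := j.isLt; omega)
      _ = (-2*N : ℂ) := by
          rw [Finset.sum_ite_eq' (Finset.range n) ((j:ℕ)) (fun _ => (-2*N : ℂ)),
            if_pos (Finset.mem_range.2 j.isLt)]
  -- total sum two ways
  set Sm : ℕ → ℂ := fun a => ∑ k ∈ Finset.range m, wfun ζM a k with hSmdef
  set Sn : ℕ → ℂ := fun b => ∑ k ∈ Finset.range n, wfun ζN b k with hSndef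
  have T0 : ∑ a ∈ Finset.range M, ∑ b ∈ Finset.range N, (Sm a * Sn b) * Fab a b = 0 := by
    apply Finset.sum_eq_zero
    intro a ha
    apply Finset.sum_eq_zero
    intro b hb
    rcases Nat.even_or_odd a with hae | hao
    · have h0 : Sm a = 0 := by
        simp only [hSmdef]
        exact S_even' hM hζM hMdef hae
      rw [h0]; ring
    rcases Nat.even_or_odd b with hbe | hbo
    · have h0 : Sn b = 0 := by
        simp only [hSndef]
        exact S_even' hN hζN hNdef hbe
      rw [h0]; ring
    have hFab : Fab a b = 0 := by
      have hlam := hard a b hao (by have := Finset.mem_range.1 ha; omega) hbo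
        (by have := Finset.mem_range.1 hb; omega)
      rcases mul_eq_zero.1 (key a b) with h | h
      · exact absurd h hlam
      · exact h
    rw [hFab]; ring
  have T1 : ∑ a ∈ Finset.range M, ∑ b ∈ Finset.range N, (Sm a * Sn b) * Fab a b
      = ∑ v, g v * ((∑ a ∈ Finset.range M, Sm a * wfun ζM a ((v.1:ℕ)))
          * (∑ b ∈ Finset.range N, Sn b * wfun ζN b ((v.2:ℕ)))) := by
    calc ∑ a ∈ Finset.range M, ∑ b ∈ Finset.range N, (Sm a * Sn b) * Fab a b
        = ∑ a ∈ Finset.range M, ∑ b ∈ Finset.range N,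
            ∑ v, (g v * W a b v) * (Sm a * Sn b) := by
          refine Finset.sum_congr rfl fun a _ => Finset.sum_congr rfl fun b _ => ?_
          simp only [hFabdef]
          rw [Finset.mul_sum]
          exact Finset.sum_congr rfl fun v _ => by ring
      _ = ∑ a ∈ Finset.range M, ∑ v, ∑ b ∈ Finset.range N,
            (g v * W a b v) * (Sm a * Sn b) :=
          Finset.sum_congr rfl fun a _ => Finset.sum_comm
      _ = ∑ v, ∑ a ∈ Finset.range M, ∑ b ∈ Finset.range N,
            (g v * W a b v) * (Sm a * Sn b) := Finset.sum_comm
      _ = ∑ v, g v * ((∑ a ∈ Finset.range M, Sm a * wfun ζM a ((v.1:ℕ)))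
          * (∑ b ∈ Finset.range N, Sn b * wfun ζN b ((v.2:ℕ)))) := by
          refine Finset.sum_congr rfl fun v _ => ?_
          rw [Finset.sum_mul_sum, Finset.mul_sum]
          refine Finset.sum_congr rfl fun a _ => ?_
          rw [Finset.mul_sum]
          refine Finset.sum_congr rfl fun b _ => ?_
          simp only [hWdef]
          ring
  have T2 : ∑ v, g v * ((∑ a ∈ Finset.range M, Sm a * wfun ζM a ((v.1:ℕ)))
      * (∑ b ∈ Finset.range N, Sn b * wfun ζN b ((v.2:ℕ))))
      = (4*M*N : ℂ) * ∑ v, g v := by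
    calc ∑ v, g v * ((∑ a ∈ Finset.range M, Sm a * wfun ζM a ((v.1:ℕ)))
        * (∑ b ∈ Finset.range N, Sn b * wfun ζN b ((v.2:ℕ))))
        = ∑ v, g v * ((-2*M : ℂ) * (-2*N : ℂ)) := by
          refine Finset.sum_congr rfl fun v _ => ?_
          have hr := final_row v.1
          have hc := final_col v.2
          simp only [hSmdef, hSndef]
          rw [hr, hc]
      _ = (4*M*N : ℂ) * ∑ v, g v := by
          rw [Finset.mul_sum]
          exact Finset.sum_congr rfl fun v _ => by ring
  have hzero : (4*M*N : ℂ) * ∑ v, g v = 0 := by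
    rw [← T2, ← T1, T0]
  have hMN : (4*M*N : ℂ) ≠ 0 := by
    have h1 : (M:ℂ) ≠ 0 := Nat.cast_ne_zero.2 (by omega)
    have h2 : (N:ℂ) ≠ 0 := Nat.cast_ne_zero.2 (by omega)
    exact mul_ne_zero (mul_ne_zero (by norm_num) h1) h2
  have hgsum : ∑ v, g v = 0 := by
    rcases mul_eq_zero.1 hzero with h | h
    · exact absurd h hMN
    · exact h
  have : ((∑ v, f v : ℤ) : ℂ) = 0 := by
    rw [← hgsum]
    push_cast
    rfl
  exact_mod_cast this

end GridBD

/-- Every balanced dominating function on Grid_{m×n} with 3 ≤ m ≤ n has weight 0,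
hence every such grid graph is d-balanced. -/
theorem grid_d_balanced (m n : ℕ) (hm : 3 ≤ m) (hmn : m ≤ n) :
    (∀ f : Fin m × Fin n → ℤ, IsBDF (gridGraph m n) f → ∑ v, f v = 0) ∧
      IsGreatest {w : ℤ | ∃ f : Fin m × Fin n → ℤ,
        IsBDF (gridGraph m n) f ∧ w = ∑ v, f v} 0 := by
  have hn : 3 ≤ n := le_trans hm hmn
  refine ⟨fun f hf => GridBD.bdf_sum_zero hm hn f hf, ?_, ?_⟩
  · refine ⟨fun _ => 0, ⟨fun v => Or.inr (Or.inl rfl), fun v => ?_⟩, by simp⟩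
    simp [closedSum]
  · rintro w ⟨f, hf, rfl⟩
    exact le_of_eq (GridBD.bdf_sum_zero hm hn f hf)
end
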